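/- arXiv:1605.09600 — 5 statements merged into one kernel-verified Lean document; each statement's English description precedes it below -/
import Mathlib

section
/- Let n ≥ 1. With vol the additive Haar measure on the space Mat(n,F) of n×n matrices over F (identified with F^{n²}) normalized so that vol(Mat(n,O_F)) = 1, the group GL(n,O_F) of n×n matrices over O_F that are invertible with inverse over O_F satisfies vol(GL(n,O_F)) = ∏_{j=1}^{n} (1 − q^{-j}). -/
open MeasureTheory

/-- The set of `n × n` matrices over the ring of integers `O_F = {x : ‖x‖ ≤ 1}`
that are invertible with inverse over `O_F`. -/
def GLO {F : Type*} [NormedField F] (n : ℕ) : Set (Matrix (Fin n) (Fin n) F) :=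
  {g | (∀ i j, ‖g i j‖ ≤ 1) ∧
    ∃ h : Matrix (Fin n) (Fin n) F, (∀ i j, ‖h i j‖ ≤ 1) ∧ g * h = 1 ∧ h * g = 1}

/-- The Borel σ-algebra on matrices, viewed as a product. -/
noncomputable instance matrixMeasurableSpace {l o α : Type*} [MeasurableSpace α] :
    MeasurableSpace (Matrix l o α) := MeasurableSpace.pi

namespace VolGLOAux

variable (F : Type*) [NormedField F] [IsUltrametricDist F]

/-- The ring of integers as a subring. -/
def O : Subring F where
  carrier := {x | ‖x‖ ≤ 1}
  mul_mem' := fun {a b} ha hb => by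
    simp only [Set.mem_setOf_eq] at *
    calc ‖a * b‖ = ‖a‖ * ‖b‖ := norm_mul a b
    _ ≤ 1 * 1 := mul_le_mul ha hb (norm_nonneg b) zero_le_one
    _ = 1 := one_mul 1
  one_mem' := by simp
  add_mem' := fun {a b} ha hb =>
    le_trans (IsUltrametricDist.norm_add_le_max a b) (max_le ha hb)
  zero_mem' := by simp
  neg_mem' := fun {a} ha => by simpa using ha

/-- The maximal ideal. -/
def mIdeal : Ideal (O F) where
  carrier := {x | ‖(x : F)‖ < 1}
  add_mem' := fun {a b} ha hb => by
    simp only [Set.mem_setOf_eq] at *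
    calc ‖((a + b : O F) : F)‖ = ‖(a : F) + (b : F)‖ := by norm_cast
    _ ≤ max ‖(a : F)‖ ‖(b : F)‖ := IsUltrametricDist.norm_add_le_max _ _
    _ < 1 := max_lt ha hb
  zero_mem' := by simp
  smul_mem' := fun c x hx => by
    simp only [Set.mem_setOf_eq, smul_eq_mul] at *
    calc ‖((c * x : O F) : F)‖ = ‖(c : F)‖ * ‖(x : F)‖ := by push_cast; exact norm_mul _ _
    _ ≤ 1 * ‖(x : F)‖ := mul_le_mul_of_nonneg_right c.2 (norm_nonneg _)
    _ = ‖(x : F)‖ := one_mul _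
    _ < 1 := hx

variable {F}

theorem isUnit_O (x : O F) (hx : ¬ ‖(x : F)‖ < 1) : IsUnit x := by
  have hx1 : ‖(x : F)‖ = 1 := le_antisymm x.2 (not_lt.mp hx)
  have hx0 : (x : F) ≠ 0 := by
    intro h; rw [h, norm_zero] at hx1; norm_num at hx1
  have hinv : ((x : F)⁻¹) ∈ O F := by
    show ‖(x : F)⁻¹‖ ≤ 1
    rw [norm_inv, hx1]; norm_num
  refine IsUnit.of_mul_eq_one (a := x) ⟨(x : F)⁻¹, hinv⟩ ?_
  ext
  push_cast
  exact mul_inv_cancel₀ hx0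

variable (F)

theorem isMaximal_mIdeal : (mIdeal F).IsMaximal := by
  rw [Ideal.isMaximal_iff]
  constructor
  · show ¬ ‖((1 : O F) : F)‖ < 1
    simp
  · rintro J x hmJ hx hxJ
    have hu := isUnit_O x hx
    obtain ⟨u, rfl⟩ := hu
    have := J.mul_mem_left (↑u⁻¹ : O F) hxJ
    rwa [Units.inv_mul] at this

instance : (mIdeal F).IsMaximal := isMaximal_mIdeal F

noncomputable instance : Field (O F ⧸ mIdeal F) := Ideal.Quotient.field _

/-- The residue field. -/
abbrev Res := O F ⧸ mIdeal F

/-- Reduction map. -/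
noncomputable abbrev π : O F →+* Res F := Ideal.Quotient.mk (mIdeal F)

variable {F}

theorem mk_eq_mk_iff (x y : O F) : π F x = π F y ↔ ‖(x : F) - y‖ < 1 := by
  rw [Ideal.Quotient.eq]
  show ‖((x - y : O F) : F)‖ < 1 ↔ _
  push_cast
  rfl

variable (F)

/-- A representative of a residue class. -/
noncomputable def rep (c : Res F) : O F := (Ideal.Quotient.mk_surjective c).choose

theorem rep_spec (c : Res F) : π F (rep F c) = c := (Ideal.Quotient.mk_surjective c).choose_spec

/-- The residue class as a subset of `F`: an open unit ball. -/
noncomputable def ballC (c : Res F) : Set F := Metric.ball ((rep F c : F)) 1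

variable {F}

theorem mem_ballC {x : F} {c : Res F} : x ∈ ballC F c ↔ ‖x - (rep F c : F)‖ < 1 := by
  rw [ballC, Metric.mem_ball, dist_eq_norm]

theorem norm_le_one_of_mem_ballC {x : F} {c : Res F} (h : x ∈ ballC F c) : ‖x‖ ≤ 1 := by
  rw [mem_ballC] at h
  calc ‖x‖ = ‖(x - (rep F c : F)) + (rep F c : F)‖ := by ring_nf
  _ ≤ max ‖x - (rep F c : F)‖ ‖(rep F c : F)‖ := IsUltrametricDist.norm_add_le_max _ _
  _ ≤ 1 := max_le h.le (rep F c).2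

theorem mk_eq_iff_mem_ballC (x : O F) (c : Res F) : π F x = c ↔ (x : F) ∈ ballC F c := by
  have h := mk_eq_mk_iff x (rep F c)
  rw [rep_spec] at h
  rw [mem_ballC]
  exact h

end VolGLOAux

open VolGLOAux

theorem vol_GLO {F : Type*} [NormedField F] [CompleteSpace F] [IsUltrametricDist F]
    [LocallyCompactSpace F] [MeasurableSpace F] [BorelSpace F]
    (q : ℕ) (hq : 1 < q) (ϖ : F) (hϖ : ‖ϖ‖ = (q : ℝ)⁻¹)
    (hϖgen : ∀ x : F, ‖x‖ < 1 → ∃ c : F, ‖c‖ ≤ 1 ∧ x = ϖ * c)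
    (hres : ∃ C : Finset F, C.card = q ∧ (∀ c ∈ C, ‖c‖ ≤ 1) ∧
      ∀ x : F, ‖x‖ ≤ 1 → ∃! c, c ∈ C ∧ ‖x - c‖ < 1)
    (vol : Measure F) [Measure.IsAddHaarMeasure vol]
    (hvol : vol {x : F | ‖x‖ ≤ 1} = 1)
    (n : ℕ) (hn : 1 ≤ n) :
    (Measure.pi fun _ : Fin n => Measure.pi fun _ : Fin n => vol :
        Measure (Matrix (Fin n) (Fin n) F)) (GLO n)
      = ∏ j ∈ Finset.Icc 1 n, (1 - ((q : ENNReal))⁻¹ ^ j) := by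
  classical
  obtain ⟨C, hCq, hC1, hCres⟩ := hres
  have hq0 : (q : ENNReal) ≠ 0 := Nat.cast_ne_zero.mpr (by omega)
  have hqt : (q : ENNReal) ≠ ⊤ := ENNReal.natCast_ne_top q
  -- sigma-finiteness
  letI : NontriviallyNormedField F :=
    { ‹NormedField F› with
      non_trivial := ⟨ϖ⁻¹, by
        rw [norm_inv, hϖ, inv_inv]
        exact_mod_cast hq⟩ }
  haveI : ProperSpace F :=
    ProperSpace.of_nontriviallyNormedField_of_weaklyLocallyCompactSpace F
  haveI : SigmaFinite vol := inferInstance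
  -- volume of open unit balls
  have hball : ∀ x : F, vol (Metric.ball x 1) = vol (Metric.ball (0 : F) 1) := by
    intro x
    have hpre : (fun y => x + y) ⁻¹' Metric.ball x 1 = Metric.ball (0 : F) 1 := by
      ext y
      simp [Metric.mem_ball, dist_eq_norm]
    rw [← hpre, measure_preimage_add]
  have hO : {x : F | ‖x‖ ≤ 1} = ⋃ c ∈ C, Metric.ball c 1 := by
    ext x
    simp only [Set.mem_setOf_eq, Set.mem_iUnion, Metric.mem_ball, dist_eq_norm, exists_prop]
    constructor
    · intro hx
      obtain ⟨c, ⟨hcC, hc⟩, -⟩ := hCres x hx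
      exact ⟨c, hcC, hc⟩
    · rintro ⟨c, hcC, hc⟩
      calc ‖x‖ = ‖(x - c) + c‖ := by ring_nf
      _ ≤ max ‖x - c‖ ‖c‖ := IsUltrametricDist.norm_add_le_max _ _
      _ ≤ 1 := max_le hc.le (hC1 c hcC)
  have hdisjC : (C : Set F).PairwiseDisjoint (fun c => Metric.ball c 1) := by
    intro c hc c' hc' hne
    refine Set.disjoint_left.mpr fun x hx hx' => hne ?_
    have hx1 : ‖x‖ ≤ 1 := by
      rw [Metric.mem_ball, dist_eq_norm] at hx
      calc ‖x‖ = ‖(x - c) + c‖ := by ring_nf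
      _ ≤ max ‖x - c‖ ‖c‖ := IsUltrametricDist.norm_add_le_max _ _
      _ ≤ 1 := max_le hx.le (hC1 c hc)
    obtain ⟨d, -, huniq⟩ := hCres x hx1
    rw [Metric.mem_ball, dist_eq_norm] at hx hx'
    rw [huniq c ⟨hc, hx⟩, huniq c' ⟨hc', hx'⟩]
  have hsum : (q : ENNReal) * vol (Metric.ball (0 : F) 1) = 1 := by
    rw [← hvol, hO, measure_biUnion_finset hdisjC (fun c _ => measurableSet_ball)]
    rw [Finset.sum_congr rfl (fun c _ => hball c), Finset.sum_const, hCq, nsmul_eq_mul]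
  have hB0 : vol (Metric.ball (0 : F) 1) = (q : ENNReal)⁻¹ := by
    rw [← one_mul (vol (Metric.ball (0 : F) 1)), ← ENNReal.inv_mul_cancel hq0 hqt,
      mul_assoc, hsum, mul_one]
  -- finiteness of the residue field
  let f : {c // c ∈ C} → Res F := fun c => π F ⟨c.1, hC1 c.1 c.2⟩
  have hfbij : Function.Bijective f := by
    constructor
    · intro c d h
      rw [mk_eq_mk_iff] at h
      obtain ⟨e, -, huniq⟩ := hCres c.1 (hC1 _ c.2)
      have h1 := huniq c.1 ⟨c.2, by simp⟩
      have h2 := huniq d.1 ⟨d.2, h⟩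
      exact Subtype.ext (h1.symm ▸ h2 ▸ rfl : c.1 = d.1).symm ▸ rfl
    · intro y
      obtain ⟨x, hx⟩ := Ideal.Quotient.mk_surjective y
      obtain ⟨c, ⟨hcC, hc⟩, -⟩ := hCres x.1 x.2
      refine ⟨⟨c, hcC⟩, ?_⟩
      rw [← hx]
      exact (mk_eq_mk_iff _ _).mpr (by simpa [norm_sub_rev] using hc)
  haveI : Finite (Res F) := Finite.of_surjective f hfbij.2
  haveI : Fintype (Res F) := Fintype.ofFinite _
  have hcard : Fintype.card (Res F) = q := by
    rw [← Nat.card_eq_fintype_card, ← Nat.card_eq_of_bijective f hfbij]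
    simp [Nat.card_eq_fintype_card, hCq]
  -- the residue classes of matrices
  let S : Matrix (Fin n) (Fin n) (Res F) → Set (Matrix (Fin n) (Fin n) F) :=
    fun r => Set.univ.pi fun i => Set.univ.pi fun j => ballC F (r i j)
  have hSmeas : ∀ r, MeasurableSet (S r) := fun r =>
    MeasurableSet.univ_pi fun i => MeasurableSet.univ_pi fun j => measurableSet_ball
  have hmemS : ∀ (r) (g : Matrix (Fin n) (Fin n) F),
      g ∈ S r ↔ ∀ i j, g i j ∈ ballC F (r i j) := by
    intro r g
    constructor
    · intro hg i j
      exact hg i (Set.mem_univ i) j (Set.mem_univ j)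
    · intro hg i _ j _
      exact hg i j
  have hSvol : ∀ r, (Measure.pi fun _ : Fin n => Measure.pi fun _ : Fin n => vol :
      Measure (Matrix (Fin n) (Fin n) F)) (S r) = ((q : ENNReal))⁻¹ ^ (n * n) := by
    intro r
    have hin : ∀ i, (Measure.pi fun _ : Fin n => vol)
        (Set.univ.pi fun j => ballC F (r i j)) = ((q : ENNReal))⁻¹ ^ n := by
      intro i
      rw [Measure.pi_pi]
      have : ∀ j : Fin n, vol (ballC F (r i j)) = (q : ENNReal)⁻¹ := by
        intro j
        rw [ballC, hball, hB0]
      rw [Finset.prod_congr rfl (fun j _ => this j), Finset.prod_const]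
      simp
    show (Measure.pi fun _ : Fin n => Measure.pi fun _ : Fin n => vol) _ = _
    rw [Measure.pi_pi]
    rw [Finset.prod_congr rfl (fun i _ => hin i), Finset.prod_const]
    simp [← pow_mul]
  -- the decomposition of GLO
  let U : Finset (Matrix (Fin n) (Fin n) (Res F)) := Finset.univ.filter IsUnit
  let ι : O F →+* F := (O F).subtype
  have hιinj : Function.Injective (ι.mapMatrix :
      Matrix (Fin n) (Fin n) (O F) → Matrix (Fin n) (Fin n) F) := by
    intro A B hAB
    ext i j
    have := congrArg (fun M => M i j) hAB
    exact congrArg Subtype.val (Subtype.ext this : A i j = B i j)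
  have hGLO : GLO n = ⋃ r ∈ U, S r := by
    ext g
    simp only [Set.mem_iUnion, exists_prop, U, Finset.mem_filter, Finset.mem_univ, true_and]
    constructor
    · rintro ⟨hg, h, hh, hgh, hhg⟩
      let G : Matrix (Fin n) (Fin n) (O F) := Matrix.of fun i j => ⟨g i j, hg i j⟩
      let H : Matrix (Fin n) (Fin n) (O F) := Matrix.of fun i j => ⟨h i j, hh i j⟩
      have hGg : ι.mapMatrix G = g := rfl
      have hHh : ι.mapMatrix H = h := rfl
      have hGH : G * H = 1 := by
        apply hιinj
        rw [map_mul, map_one, hGg, hHh, hgh]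
      have hHG : H * G = 1 := by
        apply hιinj
        rw [map_mul, map_one, hGg, hHh, hhg]
      refine ⟨(π F).mapMatrix G, ?_, ?_⟩
      · exact ⟨⟨(π F).mapMatrix G, (π F).mapMatrix H,
          by rw [← map_mul, hGH, map_one],
          by rw [← map_mul, hHG, map_one]⟩, rfl⟩
      · rw [hmemS]
        intro i j
        exact (mk_eq_iff_mem_ballC (G i j) _).mp rfl
    · rintro ⟨r, hr, hgS⟩
      rw [hmemS] at hgS
      have hg : ∀ i j, ‖g i j‖ ≤ 1 := fun i j => norm_le_one_of_mem_ballC (hgS i j)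
      let G : Matrix (Fin n) (Fin n) (O F) := Matrix.of fun i j => ⟨g i j, hg i j⟩
      have hπG : (π F).mapMatrix G = r := by
        ext i j
        exact (mk_eq_iff_mem_ballC (G i j) (r i j)).mpr (hgS i j)
      have hdet : IsUnit (π F G.det) := by
        rw [RingHom.map_det, hπG]
        exact (Matrix.isUnit_iff_isUnit_det r).mp hr
      have hdetO : IsUnit G.det := by
        apply isUnit_O
        intro hlt
        have : π F G.det = 0 := Ideal.Quotient.eq_zero_iff_mem.mpr hlt
        rw [this] at hdet
        exact not_isUnit_zero hdet
      obtain ⟨u, hu⟩ := (Matrix.isUnit_iff_isUnit_det G).mpr hdetO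
      refine ⟨hg, ι.mapMatrix (↑u⁻¹ : Matrix (Fin n) (Fin n) (O F)), ?_, ?_, ?_⟩
      · intro i j
        exact ((↑u⁻¹ : Matrix (Fin n) (Fin n) (O F)) i j).2
      · have : ι.mapMatrix G = g := rfl
        rw [← this, ← map_mul, ← hu, u.mul_inv, map_one]
      · have : ι.mapMatrix G = g := rfl
        rw [← this, ← map_mul, ← hu, u.inv_mul, map_one]
  have hdisjS : (↑U : Set (Matrix (Fin n) (Fin n) (Res F))).PairwiseDisjoint S := by
    intro r hr r' hr' hne
    refine Set.disjoint_left.mpr fun g hg hg' => hne ?_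
    ext i j
    have h1 := (hmemS r g).mp hg i j
    have h2 := (hmemS r' g).mp hg' i j
    have hx : ‖g i j‖ ≤ 1 := norm_le_one_of_mem_ballC h1
    have e1 := (mk_eq_iff_mem_ballC (⟨g i j, hx⟩ : O F) (r i j)).mpr h1
    have e2 := (mk_eq_iff_mem_ballC (⟨g i j, hx⟩ : O F) (r' i j)).mpr h2
    exact e1.symm.trans e2
  -- card of U
  have hUcard : U.card = ∏ i : Fin n, (q ^ n - q ^ (i : ℕ)) := by
    have e : {r : Matrix (Fin n) (Fin n) (Res F) // IsUnit r} ≃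
        (Matrix (Fin n) (Fin n) (Res F))ˣ :=
      { toFun := fun x => x.2.unit
        invFun := fun u => ⟨↑u, u.isUnit⟩
        left_inv := fun x => Subtype.ext x.2.unit_spec
        right_inv := fun u => Units.ext u.isUnit.unit_spec }
    have h1 : U.card = Nat.card {r : Matrix (Fin n) (Fin n) (Res F) // IsUnit r} := by
      rw [Nat.card_eq_fintype_card, Fintype.card_subtype]
    have h2 : Nat.card {r : Matrix (Fin n) (Fin n) (Res F) // IsUnit r}
        = Nat.card (GL (Fin n) (Res F)) := Nat.card_congr e
    rw [h1, h2, Matrix.card_GL_field, hcard]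
  -- compute the measure
  have hstep : (Measure.pi fun _ : Fin n => Measure.pi fun _ : Fin n => vol :
      Measure (Matrix (Fin n) (Fin n) F)) (⋃ r ∈ U, S r)
      = ∑ r ∈ U, (Measure.pi fun _ : Fin n => Measure.pi fun _ : Fin n => vol :
      Measure (Matrix (Fin n) (Fin n) F)) (S r) :=
    measure_biUnion_finset hdisjS (fun r _ => hSmeas r)
  rw [hGLO]
  refine hstep.trans ?_
  rw [
    Finset.sum_congr rfl (fun r _ => hSvol r), Finset.sum_const, hUcard, nsmul_eq_mul]
  -- final arithmetic
  have hfin : (q : ENNReal)⁻¹ ≠ ⊤ := ENNReal.inv_ne_top.mpr hq0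
  have key : ∀ i : ℕ, i < n → ((q : ENNReal) ^ n - (q : ENNReal) ^ i) * ((q : ENNReal)⁻¹) ^ n
      = 1 - ((q : ENNReal))⁻¹ ^ (n - i) := by
    intro i hi
    rw [ENNReal.sub_mul (fun _ _ => ENNReal.pow_ne_top hfin)]
    congr 1
    · rw [← mul_pow, ENNReal.mul_inv_cancel hq0 hqt, one_pow]
    · have hsplit : ((q : ENNReal))⁻¹ ^ n = ((q : ENNReal))⁻¹ ^ i * ((q : ENNReal))⁻¹ ^ (n - i) := by
        rw [← pow_add]
        congr 1
        omega
      rw [hsplit, ← mul_assoc, ← mul_pow, ENNReal.mul_inv_cancel hq0 hqt, one_pow, one_mul]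
  have hc : ∀ i : Fin n, ((q ^ n - q ^ (i : ℕ) : ℕ) : ENNReal)
      = (q : ENNReal) ^ n - (q : ENNReal) ^ (i : ℕ) := by
    intro i
    rw [ENNReal.natCast_sub, Nat.cast_pow, Nat.cast_pow]
  rw [Nat.cast_prod, Finset.prod_congr rfl (fun i _ => hc i)]
  have hpow : ((q : ENNReal))⁻¹ ^ (n * n) = ∏ _i : Fin n, ((q : ENNReal))⁻¹ ^ n := by
    rw [Finset.prod_const, Finset.card_univ, Fintype.card_fin, ← pow_mul]
  rw [hpow, ← Finset.prod_mul_distrib,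
    Finset.prod_congr rfl (fun (i : Fin n) _ => key i.1 i.isLt)]
  rw [Fin.prod_univ_eq_prod_range (fun i => 1 - ((q : ENNReal))⁻¹ ^ (n - i)) n]
  refine Finset.prod_nbij' (fun i => n - i) (fun j => n - j) ?_ ?_ ?_ ?_ ?_
  · intro a ha
    rw [Finset.mem_range] at ha
    rw [Finset.mem_Icc]
    beta_reduce
    omega
  · intro a ha
    rw [Finset.mem_Icc] at ha
    rw [Finset.mem_range]
    beta_reduce
    omega
  · intro a ha
    rw [Finset.mem_range] at ha
    beta_reduce
    omega
  · intro a ha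
    rw [Finset.mem_Icc] at ha
    beta_reduce
    omega
  · intro a ha
    rfl
end

section
/- Every n×n matrix A over F can be written as A = a·D·b where a, b ∈ GL(n,O_F) and D = diag(d_1, …, d_n) is a diagonal matrix in which each d_i is either 0 or an integer power of the uniformizer ϖ and |d_1| ≥ |d_2| ≥ … ≥ |d_n|. Moreover the tuple of absolute values (|d_1|, …, |d_n|) (equivalently, the nonincreasing tuple of singular numbers k_i ∈ ℤ∪{−∞} with |d_i| = q^{k_i}) is uniquely determined by A. -/
set_option linter.unusedSectionVars false

namespace SNFAux
open Matrix

variable {F : Type*} [NormedField F] [IsUltrametricDist F] {n : ℕ}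

lemma norm_sum_le_one {ι : Type*} {s : Finset ι} {f : ι → F} (h : ∀ i ∈ s, ‖f i‖ ≤ 1) :
    ‖∑ i ∈ s, f i‖ ≤ 1 :=
  IsUltrametricDist.norm_sum_le_of_forall_le_of_nonneg zero_le_one h

lemma one_mem_GLO : (1 : Matrix (Fin n) (Fin n) F) ∈ GLO n := by
  refine ⟨fun i j => ?_, 1, fun i j => ?_, one_mul 1, one_mul 1⟩ <;>
  · rw [Matrix.one_apply]
    split <;> simp

lemma mul_mem_GLO {a b : Matrix (Fin n) (Fin n) F} (ha : a ∈ GLO n) (hb : b ∈ GLO n) :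
    a * b ∈ GLO n := by
  obtain ⟨ha1, a', ha'1, haa', ha'a⟩ := ha
  obtain ⟨hb1, b', hb'1, hbb', hb'b⟩ := hb
  refine ⟨fun i j => ?_, b' * a', fun i j => ?_, ?_, ?_⟩
  · rw [Matrix.mul_apply]
    exact norm_sum_le_one fun k _ => by
      calc ‖a i k * b k j‖ = ‖a i k‖ * ‖b k j‖ := norm_mul _ _
      _ ≤ 1 * 1 := mul_le_mul (ha1 i k) (hb1 k j) (norm_nonneg _) zero_le_one
      _ = 1 := one_mul 1
  · rw [Matrix.mul_apply]
    exact norm_sum_le_one fun k _ => by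
      calc ‖b' i k * a' k j‖ = ‖b' i k‖ * ‖a' k j‖ := norm_mul _ _
      _ ≤ 1 * 1 := mul_le_mul (hb'1 i k) (ha'1 k j) (norm_nonneg _) zero_le_one
      _ = 1 := one_mul 1
  · rw [mul_assoc, ← mul_assoc b, hbb', one_mul, haa']
  · rw [mul_assoc, ← mul_assoc a', ha'a, one_mul, hb'b]

lemma inv_mem_GLO {a h : Matrix (Fin n) (Fin n) F} (ha : a ∈ GLO n)
    (h1 : ∀ i j, ‖h i j‖ ≤ 1) (hah : a * h = 1) (hha : h * a = 1) : h ∈ GLO n :=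
  ⟨h1, a, ha.1, hha, hah⟩

/-- The `GLO`-equivalence relation. -/
def rel (n : ℕ) (A B : Matrix (Fin n) (Fin n) F) : Prop :=
  ∃ a b, a ∈ GLO n ∧ b ∈ GLO n ∧ A = a * B * b

lemma rel_refl (A : Matrix (Fin n) (Fin n) F) : rel n A A :=
  ⟨1, 1, one_mem_GLO, one_mem_GLO, by rw [one_mul, mul_one]⟩

lemma rel_trans {A B C : Matrix (Fin n) (Fin n) F} (h1 : rel n A B) (h2 : rel n B C) :
    rel n A C := by
  obtain ⟨a, b, ha, hb, rfl⟩ := h1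
  obtain ⟨a', b', ha', hb', rfl⟩ := h2
  exact ⟨a * a', b' * b, mul_mem_GLO ha ha', mul_mem_GLO hb' hb, by noncomm_ring⟩

lemma rel_symm {A B : Matrix (Fin n) (Fin n) F} (h : rel n A B) : rel n B A := by
  obtain ⟨a, b, ha, hb, rfl⟩ := h
  obtain ⟨ha1, a', ha'1, haa', ha'a⟩ := ha
  obtain ⟨hb1, b', hb'1, hbb', hb'b⟩ := hb
  refine ⟨a', b', inv_mem_GLO ⟨ha1, a', ha'1, haa', ha'a⟩ ha'1 haa' ha'a,
    inv_mem_GLO ⟨hb1, b', hb'1, hbb', hb'b⟩ hb'1 hbb' hb'b, ?_⟩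
  calc B = (a' * a) * B * (b * b') := by rw [ha'a, hbb', one_mul, mul_one]
  _ = a' * (a * B * b) * b' := by noncomm_ring

lemma rel_mul_left {g : Matrix (Fin n) (Fin n) F} (hg : g ∈ GLO n)
    (A : Matrix (Fin n) (Fin n) F) : rel n (g * A) A :=
  ⟨g, 1, hg, one_mem_GLO, by rw [mul_one]⟩

lemma rel_mul_right {g : Matrix (Fin n) (Fin n) F} (hg : g ∈ GLO n)
    (A : Matrix (Fin n) (Fin n) F) : rel n (A * g) A :=
  ⟨1, g, one_mem_GLO, hg, by rw [one_mul]⟩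



/-- column matrix supported on column 0 -/
def colM (v : Fin (n + 1) → F) : Matrix (Fin (n + 1)) (Fin (n + 1)) F :=
  Matrix.of fun i j => if j = 0 then v i else 0

/-- row matrix supported on row 0 -/
def rowM (w : Fin (n + 1) → F) : Matrix (Fin (n + 1)) (Fin (n + 1)) F :=
  Matrix.of fun i j => if i = 0 then w j else 0

lemma colM_mul_apply (v : Fin (n+1) → F) (X : Matrix (Fin (n+1)) (Fin (n+1)) F) (i j) :
    (colM v * X) i j = v i * X 0 j := by
  simp [colM, Matrix.mul_apply, ite_mul]

lemma mul_rowM_apply (X : Matrix (Fin (n+1)) (Fin (n+1)) F) (w : Fin (n+1) → F) (i j) :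
    (X * rowM w) i j = X i 0 * w j := by
  simp [rowM, Matrix.mul_apply, mul_ite]

lemma colM_mul_colM (v w : Fin (n+1) → F) (hw : w 0 = 0) : colM v * colM w = 0 := by
  ext i j
  rw [colM_mul_apply]
  simp [colM, hw]

/-- corner-extension of a matrix -/
def extc (x : F) (m : Matrix (Fin n) (Fin n) F) : Matrix (Fin (n + 1)) (Fin (n + 1)) F :=
  Matrix.of fun i j =>
    Fin.cases (Fin.cases x (fun _ => 0) j) (fun i' => Fin.cases 0 (fun j' => m i' j') j) i

@[simp] lemma extc_zero_zero (x : F) (m : Matrix (Fin n) (Fin n) F) : extc x m 0 0 = x := rfl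
@[simp] lemma extc_zero_succ (x : F) (m : Matrix (Fin n) (Fin n) F) (j : Fin n) :
    extc x m 0 j.succ = 0 := by simp [extc]
@[simp] lemma extc_succ_zero (x : F) (m : Matrix (Fin n) (Fin n) F) (i : Fin n) :
    extc x m i.succ 0 = 0 := by simp [extc]
@[simp] lemma extc_succ_succ (x : F) (m : Matrix (Fin n) (Fin n) F) (i j : Fin n) :
    extc x m i.succ j.succ = m i j := by simp [extc]

lemma extc_mul (x y : F) (m m' : Matrix (Fin n) (Fin n) F) :
    extc x m * extc y m' = extc (x * y) (m * m') := by
  ext i j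
  rw [Matrix.mul_apply, Fin.sum_univ_succ]
  induction i using Fin.cases <;> induction j using Fin.cases <;>
    simp [Matrix.mul_apply]

lemma extc_diagonal (x : F) (d : Fin n → F) :
    extc x (Matrix.diagonal d) = Matrix.diagonal (Fin.cons x d) := by
  ext i j
  induction i using Fin.cases <;> induction j using Fin.cases
  · simp
  · simp [Matrix.diagonal_apply, (Fin.succ_ne_zero _).symm]
  · simp [Matrix.diagonal_apply, Fin.succ_ne_zero]
  · rename_i i j
    simp only [extc_succ_succ, Matrix.diagonal_apply, Fin.succ_inj, Fin.cons_succ]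



lemma transpose_mem_GLO {g : Matrix (Fin n) (Fin n) F} (hg : g ∈ GLO n) : gᵀ ∈ GLO n := by
  obtain ⟨h1, h, hh1, hgh, hhg⟩ := hg
  exact ⟨fun i j => h1 j i, hᵀ, fun i j => hh1 j i,
    by rw [← Matrix.transpose_mul, hhg, Matrix.transpose_one],
    by rw [← Matrix.transpose_mul, hgh, Matrix.transpose_one]⟩

lemma diagonal_mem_GLO {e : Fin n → F} (he : ∀ i, ‖e i‖ = 1) : Matrix.diagonal e ∈ GLO n := by
  have he0 : ∀ i, e i ≠ 0 := fun i h => by have := he i; rw [h, norm_zero] at this; exact zero_ne_one this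
  have h1 : Matrix.diagonal e * Matrix.diagonal (fun i => (e i)⁻¹) = 1 := by
    rw [Matrix.diagonal_mul_diagonal]
    have : (fun i => e i * (e i)⁻¹) = fun _ => (1 : F) := funext fun i => mul_inv_cancel₀ (he0 i)
    rw [show (Matrix.diagonal fun i => e i * (e i)⁻¹) = Matrix.diagonal fun _ => (1:F) by rw [this],
      Matrix.diagonal_one]
  have h2 : Matrix.diagonal (fun i => (e i)⁻¹) * Matrix.diagonal e = 1 := by
    rw [Matrix.diagonal_mul_diagonal]
    have : (fun i => (e i)⁻¹ * e i) = fun _ => (1 : F) := funext fun i => inv_mul_cancel₀ (he0 i)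
    rw [show (Matrix.diagonal fun i => (e i)⁻¹ * e i) = Matrix.diagonal fun _ => (1:F) by rw [this],
      Matrix.diagonal_one]
  refine ⟨fun i j => ?_, Matrix.diagonal (fun i => (e i)⁻¹), fun i j => ?_, h1, h2⟩
  · rcases eq_or_ne i j with rfl | h
    · rw [Matrix.diagonal_apply_eq]; exact le_of_eq (he i)
    · rw [Matrix.diagonal_apply_ne _ h]; simp
  · rcases eq_or_ne i j with rfl | h
    · rw [Matrix.diagonal_apply_eq, norm_inv, he i, inv_one]
    · rw [Matrix.diagonal_apply_ne _ h]; simp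

lemma colM_add (v w : Fin (n+1) → F) : colM v + colM w = colM (v + w) := by
  ext i j
  simp only [Matrix.add_apply, colM, Matrix.of_apply, Pi.add_apply]
  split <;> simp

lemma colM_zero : colM (0 : Fin (n+1) → F) = 0 := by
  ext i j; simp [colM]

lemma one_add_colM_mul (v w : Fin (n+1) → F) (hw : w 0 = 0) :
    (1 + colM v) * (1 + colM w) = 1 + (colM v + colM w) := by
  rw [mul_add, add_mul, add_mul, mul_one, mul_one, one_mul, colM_mul_colM v w hw]
  rw [add_zero, add_assoc]

lemma norm_one_add_colM_le (v : Fin (n+1) → F) (hv0 : v 0 = 0) (hv : ∀ i, ‖v i‖ ≤ 1) :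
    ∀ i j, ‖(1 + colM v) i j‖ ≤ 1 := by
  intro i j
  rw [Matrix.add_apply]
  by_cases hj : j = 0
  · subst hj
    by_cases hi : i = 0
    · subst hi
      simp [Matrix.one_apply, colM, hv0]
    · simp only [Matrix.one_apply, if_neg hi, colM, Matrix.of_apply, if_pos rfl, zero_add]
      exact hv i
  · simp only [colM, Matrix.of_apply, if_neg hj, add_zero, Matrix.one_apply]
    split <;> simp

lemma one_add_colM_mem (v : Fin (n+1) → F) (hv0 : v 0 = 0) (hv : ∀ i, ‖v i‖ ≤ 1) :
    1 + colM v ∈ GLO (n+1) := by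
  have hnv0 : (-v) 0 = 0 := by simp [hv0]
  have h1 : (1 + colM v) * (1 + colM (-v)) = 1 := by
    rw [one_add_colM_mul v (-v) hnv0, colM_add, add_neg_cancel, colM_zero, add_zero]
  have h2 : (1 + colM (-v)) * (1 + colM v) = 1 := by
    rw [one_add_colM_mul (-v) v hv0, colM_add, neg_add_cancel, colM_zero, add_zero]
  exact ⟨norm_one_add_colM_le v hv0 hv, 1 + colM (-v),
    norm_one_add_colM_le (-v) hnv0 (fun i => by rw [Pi.neg_apply, norm_neg]; exact hv i), h1, h2⟩

lemma one_add_rowM_eq (w : Fin (n+1) → F) : 1 + rowM w = (1 + colM w)ᵀ := by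
  ext i j
  simp only [Matrix.transpose_apply, Matrix.add_apply, rowM, colM, Matrix.of_apply,
    Matrix.one_apply, eq_comm]

lemma one_add_rowM_mem (w : Fin (n+1) → F) (hw0 : w 0 = 0) (hw : ∀ i, ‖w i‖ ≤ 1) :
    1 + rowM w ∈ GLO (n+1) := by
  rw [one_add_rowM_eq]
  exact transpose_mem_GLO (one_add_colM_mem w hw0 hw)

lemma perm_mul_apply (σ : Equiv.Perm (Fin n)) (A : Matrix (Fin n) (Fin n) F) (i j) :
    (((1 : Matrix (Fin n) (Fin n) F).submatrix ⇑σ id) * A) i j = A (σ i) j := by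
  simp [Matrix.mul_apply, Matrix.one_apply, ite_mul]

lemma mul_perm_apply (A : Matrix (Fin n) (Fin n) F) (τ : Equiv.Perm (Fin n)) (i j) :
    (A * ((1 : Matrix (Fin n) (Fin n) F).submatrix id ⇑τ)) i j = A i (τ j) := by
  simp [Matrix.mul_apply, Matrix.one_apply, mul_ite]

lemma perm_left_mem (σ : Equiv.Perm (Fin n)) :
    (1 : Matrix (Fin n) (Fin n) F).submatrix ⇑σ id ∈ GLO n := by
  have key : ∀ (α β : Equiv.Perm (Fin n)), ((1 : Matrix (Fin n) (Fin n) F).submatrix ⇑α id) *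
      ((1 : Matrix (Fin n) (Fin n) F).submatrix ⇑α⁻¹ id) = 1 := by
    intro α β
    ext i j
    rw [perm_mul_apply]
    simp [Matrix.one_apply, Matrix.submatrix_apply]
  refine ⟨fun i j => ?_, (1 : Matrix (Fin n) (Fin n) F).submatrix ⇑σ⁻¹ id, fun i j => ?_, ?_, ?_⟩
  · rw [Matrix.submatrix_apply, Matrix.one_apply]; split <;> simp
  · rw [Matrix.submatrix_apply, Matrix.one_apply]; split <;> simp
  · exact key σ σ
  · have := key σ⁻¹ σ⁻¹
    rwa [inv_inv] at this

section Scalar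


variable {q : ℕ} {ϖ : F}

lemma exists_pow_mul_of_le_one (hq : 1 < q) (hϖ : ‖ϖ‖ = (q : ℝ)⁻¹)
    (hϖgen : ∀ x : F, ‖x‖ < 1 → ∃ c : F, ‖c‖ ≤ 1 ∧ x = ϖ * c) :
    ∀ (m : ℕ) (x : F), x ≠ 0 → ‖x‖ ≤ 1 → ((q : ℝ)⁻¹) ^ m < ‖x‖ →
      ∃ (k : ℕ) (u : F), ‖u‖ = 1 ∧ x = ϖ ^ k * u := by
  have hq1 : (1 : ℝ) < (q : ℝ) := by exact_mod_cast hq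
  have hq0 : (0 : ℝ) < (q : ℝ)⁻¹ := inv_pos.mpr (lt_trans zero_lt_one hq1)
  intro m
  induction m with
  | zero => intro x hx hle hlt; simp only [pow_zero] at hlt; exact absurd hle (not_le.mpr hlt)
  | succ m ih =>
    intro x hx hle hlt
    rcases eq_or_lt_of_le hle with h1 | h1
    · exact ⟨0, x, h1, by rw [pow_zero, one_mul]⟩
    · obtain ⟨c, hc, hxc⟩ := hϖgen x h1
      have hc0 : c ≠ 0 := by rintro rfl; rw [mul_zero] at hxc; exact hx hxc
      have hnx : ‖x‖ = (q : ℝ)⁻¹ * ‖c‖ := by rw [hxc, norm_mul, hϖ]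
      have hclt : ((q : ℝ)⁻¹) ^ m < ‖c‖ := by
        have := hlt
        rw [hnx, pow_succ, mul_comm (((q:ℝ)⁻¹)^m)] at this
        exact lt_of_mul_lt_mul_left this (le_of_lt hq0)
      obtain ⟨k, u, hu, hcu⟩ := ih c hc0 hc hclt
      exact ⟨k + 1, u, hu, by rw [hxc, hcu, pow_succ, mul_comm (ϖ^k) ϖ, mul_assoc]⟩

lemma exists_zpow_mul (hq : 1 < q) (hϖ : ‖ϖ‖ = (q : ℝ)⁻¹)
    (hϖgen : ∀ x : F, ‖x‖ < 1 → ∃ c : F, ‖c‖ ≤ 1 ∧ x = ϖ * c)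
    (x : F) (hx : x ≠ 0) : ∃ (k : ℤ) (u : F), ‖u‖ = 1 ∧ x = ϖ ^ k * u := by
  have hq1 : (1 : ℝ) < (q : ℝ) := by exact_mod_cast hq
  have hqi1 : (q : ℝ)⁻¹ < 1 := inv_lt_one_of_one_lt₀ hq1
  have hqi0 : (0 : ℝ) ≤ (q : ℝ)⁻¹ := inv_nonneg.mpr (le_of_lt (lt_trans zero_lt_one hq1))
  have hϖ0 : ϖ ≠ 0 := by
    intro h; rw [h, norm_zero] at hϖ
    exact absurd hϖ.symm (ne_of_gt (inv_pos.mpr (lt_trans zero_lt_one hq1)))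
  rcases le_or_gt ‖x‖ 1 with hle | hgt
  · obtain ⟨m, hm⟩ := exists_pow_lt_of_lt_one (norm_pos_iff.mpr hx) hqi1
    obtain ⟨k, u, hu, hxu⟩ := exists_pow_mul_of_le_one hq hϖ hϖgen m x hx hle hm
    exact ⟨(k : ℤ), u, hu, by rw [zpow_natCast]; exact hxu⟩
  · have hxi : x⁻¹ ≠ 0 := inv_ne_zero hx
    have hxile : ‖x⁻¹‖ ≤ 1 := by
      rw [norm_inv]
      exact le_of_lt (inv_lt_one_of_one_lt₀ hgt)
    obtain ⟨m, hm⟩ := exists_pow_lt_of_lt_one (norm_pos_iff.mpr hxi) hqi1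
    obtain ⟨k, u, hu, hxu⟩ := exists_pow_mul_of_le_one hq hϖ hϖgen m x⁻¹ hxi hxile hm
    refine ⟨-(k : ℤ), u⁻¹, by rw [norm_inv, hu, inv_one], ?_⟩
    rw [← inv_inv x, hxu, mul_inv, ← zpow_natCast ϖ k, ← _root_.zpow_neg]

end Scalar

lemma perm_right_mem (τ : Equiv.Perm (Fin n)) :
    (1 : Matrix (Fin n) (Fin n) F).submatrix id ⇑τ ∈ GLO n := by
  have := transpose_mem_GLO (perm_left_mem (F := F) τ)
  rwa [Matrix.transpose_submatrix, Matrix.transpose_one] at this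

lemma rel_submatrix (σ τ : Equiv.Perm (Fin n)) (A : Matrix (Fin n) (Fin n) F) :
    rel n (A.submatrix ⇑σ ⇑τ) A := by
  refine ⟨_, _, perm_left_mem σ, perm_right_mem τ, ?_⟩
  ext i j
  rw [mul_perm_apply, perm_mul_apply, Matrix.submatrix_apply]

lemma block_of_zeroes (C : Matrix (Fin (n+1)) (Fin (n+1)) F)
    (h1 : ∀ i : Fin n, C i.succ 0 = 0) (h2 : ∀ j : Fin n, C 0 j.succ = 0) :
    C = extc (C 0 0) (Matrix.of fun i j => C i.succ j.succ) := by
  ext i j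
  induction i using Fin.cases <;> induction j using Fin.cases <;> simp [h1, h2]

lemma extc_one : extc (1 : F) (1 : Matrix (Fin n) (Fin n) F) = 1 := by
  ext i j
  induction i using Fin.cases <;> induction j using Fin.cases <;>
    simp [Matrix.one_apply, Fin.succ_ne_zero, (Fin.succ_ne_zero _).symm, Fin.succ_inj]

lemma norm_extc_le {x : F} (hx : ‖x‖ ≤ 1) {g : Matrix (Fin n) (Fin n) F}
    (hg : ∀ i j, ‖g i j‖ ≤ 1) : ∀ i j, ‖extc x g i j‖ ≤ 1 := by
  intro i j
  induction i using Fin.cases <;> induction j using Fin.cases <;>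
    simp [hx, hg]

lemma extc_mem {x : F} (hx : ‖x‖ = 1) {g : Matrix (Fin n) (Fin n) F} (hg : g ∈ GLO n) :
    extc x g ∈ GLO (n + 1) := by
  obtain ⟨hg1, h, hh1, hgh, hhg⟩ := hg
  have hx0 : x ≠ 0 := fun hx0 => by rw [hx0, norm_zero] at hx; exact zero_ne_one hx
  have hxi : ‖x⁻¹‖ = 1 := by rw [norm_inv, hx, inv_one]
  refine ⟨norm_extc_le (le_of_eq hx) hg1, extc x⁻¹ h, norm_extc_le (le_of_eq hxi) hh1, ?_, ?_⟩
  · rw [extc_mul, mul_inv_cancel₀ hx0, hgh, extc_one]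
  · rw [extc_mul, inv_mul_cancel₀ hx0, hhg, extc_one]

lemma exists_diag {q : ℕ} {ϖ : F} (hq : 1 < q) (hϖ : ‖ϖ‖ = (q : ℝ)⁻¹)
    (hϖgen : ∀ x : F, ‖x‖ < 1 → ∃ c : F, ‖c‖ ≤ 1 ∧ x = ϖ * c) :
    ∀ (n : ℕ) (A : Matrix (Fin n) (Fin n) F),
      ∃ d : Fin n → F, (∀ i, d i = 0 ∨ ∃ k : ℤ, d i = ϖ ^ k) ∧ rel n A (Matrix.diagonal d) := by
  intro n
  induction n with
  | zero =>
    intro A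
    refine ⟨fun _ => 0, fun i => Or.inl rfl, ?_⟩
    have hA0 : A = Matrix.diagonal fun _ => (0 : F) := by ext i j; exact i.elim0
    rw [hA0]
    exact rel_refl _
  | succ m ih =>
    intro A
    by_cases hA : A = 0
    · refine ⟨fun _ => 0, fun i => Or.inl rfl, ?_⟩
      rw [hA, Matrix.diagonal_zero]
      exact rel_refl 0
    · obtain ⟨⟨i0, j0⟩, hmax⟩ := Finite.exists_max (fun p : Fin (m+1) × Fin (m+1) => ‖A p.1 p.2‖)
      have hp0 : A i0 j0 ≠ 0 := by
        intro h
        apply hA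
        ext i j
        have h2 := hmax (i, j)
        rw [h, norm_zero] at h2
        rw [Matrix.zero_apply, ← norm_le_zero_iff]
        exact h2
      set B := A.submatrix ⇑(Equiv.swap 0 i0) ⇑(Equiv.swap 0 j0) with hB
      have hrelAB : rel (m+1) A B := rel_symm (rel_submatrix _ _ A)
      have hB00 : B 0 0 = A i0 j0 := by
        rw [hB, Matrix.submatrix_apply, Equiv.swap_apply_left, Equiv.swap_apply_left]
      set p := B 0 0 with hpdef
      have hp : p ≠ 0 := by rw [hB00]; exact hp0
      have hmaxB : ∀ i j, ‖B i j‖ ≤ ‖p‖ := by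
        intro i j
        rw [hB00]
        exact hmax (_, _)
      set v : Fin (m+1) → F := fun i => Fin.cases 0 (fun i' => -(B i'.succ 0 / p)) i with hv
      set w : Fin (m+1) → F := fun j => Fin.cases 0 (fun j' => -(B 0 j'.succ / p)) j with hw
      have hv0 : v 0 = 0 := rfl
      have hw0 : w 0 = 0 := rfl
      have hvsucc : ∀ i : Fin m, v i.succ = -(B i.succ 0 / p) := fun i => by
        rw [hv]; simp
      have hwsucc : ∀ j : Fin m, w j.succ = -(B 0 j.succ / p) := fun j => by
        rw [hw]; simp
      have hvle : ∀ i, ‖v i‖ ≤ 1 := by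
        intro i
        induction i using Fin.cases
        · rw [hv0, norm_zero]; exact zero_le_one
        · rw [hvsucc, norm_neg, norm_div]
          exact div_le_one_of_le₀ (hmaxB _ _) (norm_nonneg _)
      have hwle : ∀ j, ‖w j‖ ≤ 1 := by
        intro j
        induction j using Fin.cases
        · rw [hw0, norm_zero]; exact zero_le_one
        · rw [hwsucc, norm_neg, norm_div]
          exact div_le_one_of_le₀ (hmaxB _ _) (norm_nonneg _)
      set L := 1 + colM v with hL
      set R := 1 + rowM w with hR
      have hLmem : L ∈ GLO (m+1) := one_add_colM_mem v hv0 hvle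
      have hRmem : R ∈ GLO (m+1) := one_add_rowM_mem w hw0 hwle
      set C := L * B * R with hC
      have hrelBC : rel (m+1) B C :=
        rel_symm (rel_trans (rel_mul_right hRmem (L * B)) (rel_mul_left hLmem B))
      have hLB : L * B = B + colM v * B := by rw [hL, Matrix.add_mul, Matrix.one_mul]
      have h1 : ∀ i j, (L * B) i j = B i j + v i * B 0 j := fun i j => by
        rw [hLB, Matrix.add_apply, colM_mul_apply]
      have hCapp : ∀ i j, C i j = (B i j + v i * B 0 j) + (B i 0 + v i * B 0 0) * w j := by
        intro i j
        have h2 : C = L * B + (L * B) * rowM w := by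
          rw [hC, hR, Matrix.mul_add, Matrix.mul_one]
        rw [h2, Matrix.add_apply, mul_rowM_apply, h1, h1]
      have hpd : ∀ x : F, p * (x / p) = x := fun x => by
        rw [mul_comm, div_mul_cancel₀ _ hp]
      have hC00 : C 0 0 = p := by
        rw [hCapp, hv0, hw0, zero_mul, add_zero, mul_zero, add_zero]
      have hCs0 : ∀ i : Fin m, C i.succ 0 = 0 := by
        intro i
        rw [hCapp, hw0, mul_zero, add_zero, hvsucc, neg_mul, div_mul_cancel₀ _ hp,
          add_neg_cancel]
      have hC0s : ∀ j : Fin m, C 0 j.succ = 0 := by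
        intro j
        rw [hCapp, hv0, zero_mul, add_zero, zero_mul, add_zero, hwsucc, mul_neg, hpd,
          add_neg_cancel]
      have hCblock : C = extc p (Matrix.of fun i j => C i.succ j.succ) := by
        have hb := block_of_zeroes C hCs0 hC0s
        rwa [hC00] at hb
      obtain ⟨d₁, hd₁, hrel₁⟩ := ih (Matrix.of fun i j => C i.succ j.succ)
      obtain ⟨a₁, b₁, ha₁, hb₁, hfac⟩ := hrel₁
      have hrelC : rel (m+1) C (Matrix.diagonal (Fin.cons p d₁)) := by
        refine ⟨extc 1 a₁, extc 1 b₁, extc_mem norm_one ha₁, extc_mem norm_one hb₁, ?_⟩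
        rw [← extc_diagonal, extc_mul, extc_mul, one_mul, mul_one, ← hfac, ← hCblock]
      obtain ⟨k, u, hu, hpu⟩ := exists_zpow_mul hq hϖ hϖgen p hp
      have hdiagfold : Matrix.diagonal (Fin.cons p d₁) =
          Matrix.diagonal (Fin.cons u (fun _ => (1:F))) * Matrix.diagonal (Fin.cons (ϖ ^ k) d₁) := by
        rw [Matrix.diagonal_mul_diagonal]
        have harg : (fun i => Fin.cons u (fun _ => (1:F)) i * Fin.cons (ϖ ^ k) d₁ i) =
            Fin.cons p d₁ := by
          funext i
          induction i using Fin.cases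
          · rw [Fin.cons_zero, Fin.cons_zero, Fin.cons_zero, hpu, mul_comm]
          · rw [Fin.cons_succ, Fin.cons_succ, Fin.cons_succ, one_mul]
        exact (congrArg Matrix.diagonal harg).symm
      have humem : Matrix.diagonal (Fin.cons u (fun _ => (1:F))) ∈ GLO (m+1) := by
        refine diagonal_mem_GLO (fun i => ?_)
        induction i using Fin.cases
        · rw [Fin.cons_zero]; exact hu
        · rw [Fin.cons_succ]; exact norm_one
      have hrelD : rel (m+1) (Matrix.diagonal (Fin.cons p d₁))
          (Matrix.diagonal (Fin.cons (ϖ^k) d₁)) := by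
        rw [hdiagfold]
        exact rel_mul_left humem _
      refine ⟨Fin.cons (ϖ ^ k) d₁, ?_,
        rel_trans (rel_trans (rel_trans hrelAB hrelBC) hrelC) hrelD⟩
      intro i
      induction i using Fin.cases
      · exact Or.inr ⟨k, by rw [Fin.cons_zero]⟩
      · rename_i i
        rw [Fin.cons_succ]
        exact hd₁ i

lemma exists_sorted_perm (d : Fin n → F) :
    ∃ σ : Equiv.Perm (Fin n), ∀ i j : Fin n, i ≤ j → ‖d (σ j)‖ ≤ ‖d (σ i)‖ := by
  refine ⟨Tuple.sort (fun i => -‖d i‖), fun i j hij => ?_⟩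
  have h := Tuple.monotone_sort (fun i => -‖d i‖) hij
  simpa using h


open scoped NNReal

lemma nnle {x y : F} (h : ‖x‖ ≤ ‖y‖) : ‖x‖₊ ≤ ‖y‖₊ := h

lemma nnle1 {x : F} (h : ‖x‖ ≤ 1) : ‖x‖₊ ≤ 1 := by
  rwa [← NNReal.coe_le_coe, coe_nnnorm, NNReal.coe_one]

/-- maximum of the nnnorms of the `k × k` minors -/
def Mk (k n : ℕ) (A : Matrix (Fin n) (Fin n) F) : ℝ≥0 :=
  Finset.univ.sup fun rc : (Fin k → Fin n) × (Fin k → Fin n) =>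
    ‖(A.submatrix rc.1 rc.2).det‖₊

lemma nnnorm_minor_le_Mk (k : ℕ) (A : Matrix (Fin n) (Fin n) F) (r c : Fin k → Fin n) :
    ‖(A.submatrix r c).det‖₊ ≤ Mk k n A :=
  Finset.le_sup (f := fun rc : (Fin k → Fin n) × (Fin k → Fin n) =>
    ‖(A.submatrix rc.1 rc.2).det‖₊) (Finset.mem_univ (r, c))

lemma minor_mul_expand (k : ℕ) (X Y : Matrix (Fin n) (Fin n) F) (r c : Fin k → Fin n) :
    ((X * Y).submatrix r c).det =
      ∑ f : Fin k → Fin n, (∏ i, X (r i) (f i)) * (Y.submatrix f c).det := by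
  have hrows : ((X * Y).submatrix r c) =
      Matrix.of fun i => ∑ t : Fin n, X (r i) t • fun j => Y t (c j) := by
    ext i j
    simp [Matrix.mul_apply, Finset.sum_apply]
  rw [show ((X * Y).submatrix r c).det =
      Matrix.detRowAlternating ((X * Y).submatrix r c) from rfl, hrows]
  have hms := (Matrix.detRowAlternating (n := Fin k) (R := F)).toMultilinearMap.map_sum
    (g := fun i t => X (r i) t • fun j => Y t (c j))
  simp only [AlternatingMap.coe_multilinearMap] at hms
  rw [show (Matrix.detRowAlternating
      (Matrix.of fun i => ∑ t : Fin n, X (r i) t • fun j => Y t (c j)))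
    = Matrix.detRowAlternating (fun i => ∑ t : Fin n, X (r i) t • fun j => Y t (c j)) from rfl]
  rw [hms]
  refine Finset.sum_congr rfl fun f _ => ?_
  have hsm := (Matrix.detRowAlternating (n := Fin k) (R := F)).toMultilinearMap.map_smul_univ
    (fun i => X (r i) (f i)) (fun i j => Y (f i) (c j))
  simp only [AlternatingMap.coe_multilinearMap] at hsm
  rw [hsm, smul_eq_mul]
  rfl

lemma Mk_mul_left_le (k : ℕ) {g : Matrix (Fin n) (Fin n) F} (hg : ∀ i j, ‖g i j‖ ≤ 1)
    (A : Matrix (Fin n) (Fin n) F) : Mk k n (g * A) ≤ Mk k n A := by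
  apply Finset.sup_le
  rintro ⟨r, c⟩ -
  rw [minor_mul_expand]
  refine IsUltrametricDist.nnnorm_sum_le_of_forall_le ?_
  intro f _
  rw [nnnorm_mul]
  calc ‖∏ i, g (r i) (f i)‖₊ * ‖(A.submatrix f c).det‖₊
      ≤ 1 * Mk k n A := by
        refine mul_le_mul' ?_ (nnnorm_minor_le_Mk k A f c)
        rw [nnnorm_prod]
        exact Finset.prod_le_one (fun _ _ => zero_le) (fun i _ => nnle1 (hg _ _))
    _ = Mk k n A := one_mul _

lemma Mk_mul_right_le (k : ℕ) (A : Matrix (Fin n) (Fin n) F) {g : Matrix (Fin n) (Fin n) F}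
    (hg : ∀ i j, ‖g i j‖ ≤ 1) : Mk k n (A * g) ≤ Mk k n A := by
  apply Finset.sup_le
  rintro ⟨r, c⟩ -
  have h1 : ((A * g).submatrix r c).det = ((gᵀ * Aᵀ).submatrix c r).det := by
    rw [← Matrix.det_transpose, Matrix.transpose_submatrix, Matrix.transpose_mul]
  rw [h1, minor_mul_expand]
  refine IsUltrametricDist.nnnorm_sum_le_of_forall_le ?_
  intro f _
  rw [nnnorm_mul]
  have h2 : (Aᵀ.submatrix f r).det = (A.submatrix r f).det := by
    rw [← Matrix.transpose_submatrix, Matrix.det_transpose]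
  rw [h2]
  calc ‖∏ i, gᵀ (c i) (f i)‖₊ * ‖(A.submatrix r f).det‖₊
      ≤ 1 * Mk k n A := by
        refine mul_le_mul' ?_ (nnnorm_minor_le_Mk k A r f)
        rw [nnnorm_prod]
        exact Finset.prod_le_one (fun _ _ => zero_le)
          (fun i _ => nnle1 (hg _ _))
    _ = Mk k n A := one_mul _

lemma Mk_eq_of_factor (k : ℕ) {a b A D : Matrix (Fin n) (Fin n) F}
    (ha : a ∈ GLO n) (hb : b ∈ GLO n) (hfac : A = a * D * b) :
    Mk k n A = Mk k n D := by
  obtain ⟨ha1, a', ha'1, haa', ha'a⟩ := ha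
  obtain ⟨hb1, b', hb'1, hbb', hb'b⟩ := hb
  have hD : D = a' * (A * b') := by
    rw [hfac]
    have : a' * (a * D * b * b') = (a' * a) * D * (b * b') := by noncomm_ring
    rw [this, ha'a, hbb', one_mul, mul_one]
  refine le_antisymm ?_ ?_
  · rw [hfac, mul_assoc]
    exact le_trans (Mk_mul_left_le k ha1 _) (Mk_mul_right_le k _ hb1)
  · rw [hD]
    exact le_trans (Mk_mul_left_le k ha'1 _) (Mk_mul_right_le k _ hb'1)


/-- product of the `k` largest diagonal nnnorms -/
noncomputable def Pk (d : Fin n → F) (k : ℕ) : ℝ≥0 :=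
  ∏ i ∈ Finset.univ.filter (fun i : Fin n => (i : ℕ) < k), ‖d i‖₊

lemma strictMono_fin_le {k m : ℕ} (g : Fin k → Fin m) (h : StrictMono g) (i : Fin k) :
    (i : ℕ) ≤ (g i : ℕ) := by
  have key : ∀ t : ℕ, ∀ ht : t < k, t ≤ (g ⟨t, ht⟩ : ℕ) := by
    intro t
    induction t with
    | zero => intro _; exact Nat.zero_le _
    | succ s ihs =>
      intro ht
      have hs : s < k := lt_trans (Nat.lt_succ_self s) ht
      have h1 : (g ⟨s, hs⟩ : ℕ) < (g ⟨s + 1, ht⟩ : ℕ) := h (Fin.mk_lt_mk.mpr (Nat.lt_succ_self s))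
      exact Nat.succ_le_of_lt (lt_of_le_of_lt (ihs hs) h1)
  have := key i.1 i.2
  simpa using this

lemma filter_lt_eq_image {k : ℕ} (hk : k ≤ n) :
    Finset.univ.filter (fun i : Fin n => (i : ℕ) < k) =
      Finset.image (Fin.castLE hk) Finset.univ := by
  ext j
  simp only [Finset.mem_filter, Finset.mem_univ, true_and, Finset.mem_image]
  constructor
  · intro hj
    exact ⟨⟨j.1, hj⟩, by ext; simp⟩
  · rintro ⟨i, rfl⟩
    exact i.2

lemma Pk_eq (d : Fin n → F) {k : ℕ} (hk : k ≤ n) :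
    Pk d k = ∏ i : Fin k, ‖d (Fin.castLE hk i)‖₊ := by
  rw [Pk, filter_lt_eq_image hk,
    Finset.prod_image (fun x _ y _ h => Fin.castLE_injective hk h)]

lemma prod_comp_injective_le (d : Fin n → F)
    (hsort : ∀ i j : Fin n, i ≤ j → ‖d j‖ ≤ ‖d i‖)
    {k : ℕ} (r : Fin k → Fin n) (hr : Function.Injective r) :
    ∏ i : Fin k, ‖d (r i)‖₊ ≤ Pk d k := by
  classical
  set S : Finset (Fin n) := Finset.image r Finset.univ with hS
  have hcard : S.card = k := by
    rw [hS, Finset.card_image_of_injective _ hr, Finset.card_univ, Fintype.card_fin]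
  have hk : k ≤ n := by
    rw [← hcard]
    exact le_trans (Finset.card_le_univ S) (le_of_eq (by simp))
  have h1 : ∏ i : Fin k, ‖d (r i)‖₊ = ∏ j ∈ S, ‖d j‖₊ := by
    rw [hS, Finset.prod_image (fun x _ y _ h => hr h)]
  set e := S.orderIsoOfFin hcard with he
  have h2 : ∏ j ∈ S, ‖d j‖₊ = ∏ i : Fin k, ‖d (e i : Fin n)‖₊ := by
    rw [← Finset.prod_coe_sort S (fun j => ‖d j‖₊)]
    exact (Equiv.prod_comp e.toEquiv (fun x : S => ‖d (x : Fin n)‖₊)).symm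
  have hmono : StrictMono (fun i : Fin k => (e i : Fin n)) := fun i j hij => e.strictMono hij
  rw [h1, h2, Pk_eq d hk]
  refine Finset.prod_le_prod' (fun i _ => ?_)
  refine nnle (hsort (Fin.castLE hk i) (e i : Fin n) ?_)
  rw [Fin.le_def]
  exact le_trans (le_of_eq rfl) (strictMono_fin_le _ hmono i)

lemma nnnorm_sign_mul (σ : Equiv.Perm (Fin n)) (x : F) :
    ‖((Equiv.Perm.sign σ : ℤ) : F) * x‖₊ = ‖x‖₊ := by
  rcases Int.units_eq_one_or (Equiv.Perm.sign σ) with h | h <;>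
    rw [h] <;> push_cast <;> simp

lemma Mk_diagonal (d : Fin n → F) (hsort : ∀ i j : Fin n, i ≤ j → ‖d j‖ ≤ ‖d i‖)
    {k : ℕ} (hk : k ≤ n) : Mk k n (Matrix.diagonal d) = Pk d k := by
  classical
  refine le_antisymm ?_ ?_
  · apply Finset.sup_le
    rintro ⟨r, c⟩ -
    by_cases hr : Function.Injective r
    · rw [Matrix.det_apply']
      refine IsUltrametricDist.nnnorm_sum_le_of_forall_le ?_
      intro σ _
      rw [nnnorm_sign_mul, nnnorm_prod]
      calc ∏ i, ‖((Matrix.diagonal d).submatrix r c) (σ i) i‖₊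
          ≤ ∏ i, ‖d (r (σ i))‖₊ := by
            refine Finset.prod_le_prod' (fun i _ => ?_)
            rw [Matrix.submatrix_apply, Matrix.diagonal_apply]
            split
            · rename_i hh; rw [hh]
            · simp
        _ = ∏ i, ‖d (r i)‖₊ := Equiv.prod_comp σ (fun i => ‖d (r i)‖₊)
        _ ≤ Pk d k := prod_comp_injective_le d hsort r hr
    · rw [Function.not_injective_iff] at hr
      obtain ⟨i, j, hij, hne⟩ := hr
      have hdet : ((Matrix.diagonal d).submatrix r c).det = 0 := by
        refine Matrix.det_zero_of_row_eq hne ?_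
        funext y
        rw [Matrix.submatrix_apply, Matrix.submatrix_apply, hij]
      rw [hdet, nnnorm_zero]
      exact zero_le
  · rw [Pk_eq d hk]
    have h1 : ((Matrix.diagonal d).submatrix (Fin.castLE hk) (Fin.castLE hk)).det
        = ∏ i : Fin k, d (Fin.castLE hk i) := by
      rw [Matrix.submatrix_diagonal _ _ (Fin.castLE_injective hk), Matrix.det_diagonal]
      rfl
    calc ∏ i : Fin k, ‖d (Fin.castLE hk i)‖₊
        = ‖((Matrix.diagonal d).submatrix (Fin.castLE hk) (Fin.castLE hk)).det‖₊ := by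
          rw [h1, nnnorm_prod]
      _ ≤ Mk k n (Matrix.diagonal d) := nnnorm_minor_le_Mk _ _ _ _

lemma Pk_succ (d : Fin n → F) {m : ℕ} (i : Fin n) (him : (i : ℕ) = m) :
    Pk d (m + 1) = Pk d m * ‖d i‖₊ := by
  classical
  have hins : Finset.univ.filter (fun j : Fin n => (j : ℕ) < m + 1) =
      insert i (Finset.univ.filter (fun j : Fin n => (j : ℕ) < m)) := by
    ext j
    simp only [Finset.mem_filter, Finset.mem_univ, true_and, Finset.mem_insert]
    constructor
    · intro hj
      rcases Nat.lt_succ_iff_lt_or_eq.mp hj with h | h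
      · exact Or.inr (by simpa using h)
      · exact Or.inl (Fin.ext (by rw [h, him]))
    · rintro (rfl | hj)
      · rw [him]; exact Nat.lt_succ_self m
      · exact lt_trans hj (Nat.lt_succ_self m)
  have hnotmem : i ∉ Finset.univ.filter (fun j : Fin n => (j : ℕ) < m) := by
    simp [him]
  rw [Pk, Pk, hins, Finset.prod_insert hnotmem, mul_comm]

lemma norms_unique {d d' : Fin n → F}
    (hsd : ∀ i j : Fin n, i ≤ j → ‖d j‖ ≤ ‖d i‖)
    (hsd' : ∀ i j : Fin n, i ≤ j → ‖d' j‖ ≤ ‖d' i‖)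
    (key : ∀ k, k ≤ n → Pk d k = Pk d' k) :
    ∀ i, ‖d i‖ = ‖d' i‖ := by
  classical
  have main : ∀ m : ℕ, ∀ i : Fin n, (i : ℕ) < m → ‖d i‖₊ = ‖d' i‖₊ := by
    intro m
    induction m with
    | zero => intro i hi; exact absurd hi (Nat.not_lt_zero _)
    | succ t iht =>
      intro i hi
      rcases Nat.lt_succ_iff_lt_or_eq.mp hi with h | h
      · exact iht i h
      · have htn : t ≤ n := le_of_lt (h ▸ i.2)
        have ht1n : t + 1 ≤ n := h ▸ i.2
        have e1 : Pk d t * ‖d i‖₊ = Pk d' t * ‖d' i‖₊ := by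
          rw [← Pk_succ d i h, ← Pk_succ d' i h]
          exact key (t + 1) ht1n
        have e0 : Pk d t = Pk d' t := key t htn
        by_cases hz : Pk d t = 0
        · have hz' : Pk d' t = 0 := by rw [← e0]; exact hz
          obtain ⟨j, hjmem, hj0⟩ := Finset.prod_eq_zero_iff.mp hz
          obtain ⟨j', hjmem', hj0'⟩ := Finset.prod_eq_zero_iff.mp hz'
          have hji : j ≤ i := by
            rw [Fin.le_def]
            exact le_of_lt (lt_of_lt_of_le (Finset.mem_filter.mp hjmem).2 (le_of_eq h.symm))
          have hji' : j' ≤ i := by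
            rw [Fin.le_def]
            exact le_of_lt (lt_of_lt_of_le (Finset.mem_filter.mp hjmem').2 (le_of_eq h.symm))
          have hd0 : ‖d i‖₊ = 0 := le_antisymm (hj0 ▸ nnle (hsd j i hji)) (zero_le)
          have hd0' : ‖d' i‖₊ = 0 := le_antisymm (hj0' ▸ nnle (hsd' j' i hji')) (zero_le)
          rw [hd0, hd0']
        · rw [e0] at e1
          exact mul_left_cancel₀ (by rwa [← e0]) e1
  intro i
  have := main ((i : ℕ) + 1) i (Nat.lt_succ_self _)
  calc ‖d i‖ = (‖d i‖₊ : ℝ) := (coe_nnnorm _).symm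
    _ = (‖d' i‖₊ : ℝ) := by rw [this]
    _ = ‖d' i‖ := coe_nnnorm _


end SNFAux

/-- Smith normal form over `O_F`, with uniqueness of singular numbers:
every `n × n` matrix `A` over `F` can be written as `A = a · diag(d) · b` with
`a, b ∈ GL(n, O_F)`, each `d i` equal to `0` or an integer power of the uniformizer `ϖ`,
and `‖d 1‖ ≥ ‖d 2‖ ≥ …`; moreover the tuple `(‖d i‖)_i` is uniquely determined by `A`. -/
theorem smith_normal_form {F : Type*} [NormedField F] [CompleteSpace F]
    [IsUltrametricDist F] [LocallyCompactSpace F]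
    (q : ℕ) (hq : 1 < q) (ϖ : F) (hϖ : ‖ϖ‖ = (q : ℝ)⁻¹)
    (hϖgen : ∀ x : F, ‖x‖ < 1 → ∃ c : F, ‖c‖ ≤ 1 ∧ x = ϖ * c)
    (hres : ∃ C : Finset F, C.card = q ∧ (∀ c ∈ C, ‖c‖ ≤ 1) ∧
      ∀ x : F, ‖x‖ ≤ 1 → ∃! c, c ∈ C ∧ ‖x - c‖ < 1)
    (n : ℕ) (A : Matrix (Fin n) (Fin n) F) :
    (∃ a b : Matrix (Fin n) (Fin n) F, a ∈ GLO n ∧ b ∈ GLO n ∧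
      ∃ d : Fin n → F,
        (∀ i, d i = 0 ∨ ∃ k : ℤ, d i = ϖ ^ k) ∧
        (∀ i j : Fin n, i ≤ j → ‖d j‖ ≤ ‖d i‖) ∧
        A = a * Matrix.diagonal d * b)
    ∧
    (∀ (a b a' b' : Matrix (Fin n) (Fin n) F) (d d' : Fin n → F),
      a ∈ GLO n → b ∈ GLO n → a' ∈ GLO n → b' ∈ GLO n →
      (∀ i, d i = 0 ∨ ∃ k : ℤ, d i = ϖ ^ k) →
      (∀ i j : Fin n, i ≤ j → ‖d j‖ ≤ ‖d i‖) →
      (∀ i, d' i = 0 ∨ ∃ k : ℤ, d' i = ϖ ^ k) →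
      (∀ i j : Fin n, i ≤ j → ‖d' j‖ ≤ ‖d' i‖) →
      A = a * Matrix.diagonal d * b → A = a' * Matrix.diagonal d' * b' →
      ∀ i, ‖d i‖ = ‖d' i‖) := by
  classical
  constructor
  · obtain ⟨d, hd, hrel⟩ := SNFAux.exists_diag hq hϖ hϖgen n A
    obtain ⟨σ, hσ⟩ := SNFAux.exists_sorted_perm d
    have hrel2 : SNFAux.rel n A (Matrix.diagonal (d ∘ σ)) := by
      refine SNFAux.rel_trans hrel (SNFAux.rel_symm ?_)
      have h := SNFAux.rel_submatrix σ σ (Matrix.diagonal d)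
      rwa [Matrix.submatrix_diagonal_equiv] at h
    obtain ⟨a, b, ha, hb, heq⟩ := hrel2
    exact ⟨a, b, ha, hb, d ∘ σ, fun i => hd (σ i), fun i j hij => hσ i j hij, heq⟩
  · intro a b a' b' d d' ha hb ha' hb' hd hsd hd' hsd' hfac hfac' i
    refine SNFAux.norms_unique hsd hsd' (fun k hk => ?_) i
    rw [← SNFAux.Mk_diagonal d hsd hk, ← SNFAux.Mk_diagonal d' hsd' hk,
      ← SNFAux.Mk_eq_of_factor k ha hb hfac, ← SNFAux.Mk_eq_of_factor k ha' hb' hfac']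
end

section
/- Define Θ : F → ℂ by Θ(x) := ∫_{O_F × O_F} χ(z₁ z₂ x) dvol(z₁) dvol(z₂). Then Θ(x) = 1 whenever |x| ≤ 1, and Θ(x) = q^{-ℓ} whenever |x| = q^{ℓ} with ℓ ≥ 1; equivalently, Θ(x) = q^{-ℓ·1_{ℓ≥1}} whenever |x| = q^{ℓ}, ℓ ∈ ℤ. -/
open MeasureTheory
open scoped ENNReal

section Aux

variable {F : Type*} [NormedField F] [IsUltrametricDist F] [MeasurableSpace F] [BorelSpace F]

private lemma theta_vol_ball
    (q : ℕ) (hq : 1 < q) (ϖ : F) (hϖ : ‖ϖ‖ = (q : ℝ)⁻¹)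
    (hϖgen : ∀ x : F, ‖x‖ < 1 → ∃ c : F, ‖c‖ ≤ 1 ∧ x = ϖ * c)
    (hres : ∃ C : Finset F, C.card = q ∧ (∀ c ∈ C, ‖c‖ ≤ 1) ∧
      ∀ x : F, ‖x‖ ≤ 1 → ∃! c, c ∈ C ∧ ‖x - c‖ < 1)
    (vol : Measure F) [Measure.IsAddHaarMeasure vol]
    (hvol : vol {x : F | ‖x‖ ≤ 1} = 1)
    (n : ℕ) :
    vol {z : F | ‖z‖ ≤ ((q:ℝ)⁻¹) ^ n} = (q : ℝ≥0∞)⁻¹ ^ n := by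
  have hq0 : (0:ℝ) < q := by positivity
  have hϖ0 : ϖ ≠ 0 := by
    intro h; rw [h, norm_zero] at hϖ
    exact absurd hϖ.symm (by positivity)
  have hgap : ∀ z : F, ‖z‖ < 1 → ‖z‖ ≤ (q:ℝ)⁻¹ := by
    intro z hz
    obtain ⟨c, hc, hzc⟩ := hϖgen z hz
    rw [hzc, norm_mul, hϖ]
    calc (q:ℝ)⁻¹ * ‖c‖ ≤ (q:ℝ)⁻¹ * 1 := mul_le_mul_of_nonneg_left hc (by positivity)
      _ = (q:ℝ)⁻¹ := mul_one _
  obtain ⟨C, hCcard, hCnorm, hCuniq⟩ := hres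
  induction n with
  | zero => simpa using hvol
  | succ n ih =>
    have hmeas : ∀ r : ℝ, MeasurableSet {z : F | ‖z‖ ≤ r} := fun r =>
      (isClosed_le continuous_norm continuous_const).measurableSet
    set T : ℕ → Set F := fun m => {z : F | ‖z‖ ≤ ((q:ℝ)⁻¹) ^ m} with hT
    set co : F → Set F := fun c => (fun h => (-(ϖ ^ n * c)) + h) ⁻¹' T (n+1) with hco
    have hcoval : ∀ c z, z ∈ co c ↔ ‖z - ϖ ^ n * c‖ ≤ ((q:ℝ)⁻¹) ^ (n+1) := by
      intro c z
      simp only [hco, Set.mem_preimage, hT, Set.mem_setOf_eq]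
      rw [neg_add_eq_sub]
    have hcover : T n = ⋃ c ∈ C, co c := by
      apply Set.Subset.antisymm
      · intro z hz
        have hw : ‖z / ϖ ^ n‖ ≤ 1 := by
          rw [norm_div, norm_pow, hϖ, div_le_one (by positivity)]
          exact hz
        obtain ⟨c, ⟨hcC, hcn⟩, _⟩ := hCuniq _ hw
        refine Set.mem_biUnion hcC ?_
        rw [hcoval]
        have : z - ϖ ^ n * c = ϖ ^ n * (z / ϖ ^ n - c) := by
          field_simp
        rw [this, norm_mul, norm_pow, hϖ, pow_succ]
        exact mul_le_mul_of_nonneg_left (hgap _ hcn) (by positivity)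
      · refine Set.iUnion₂_subset fun c hcC z hz => ?_
        rw [hcoval] at hz
        have h1 : ‖z - ϖ ^ n * c‖ ≤ ((q:ℝ)⁻¹) ^ n := by
          refine hz.trans ?_
          rw [pow_succ]
          calc ((q:ℝ)⁻¹)^n * (q:ℝ)⁻¹ ≤ ((q:ℝ)⁻¹)^n * 1 :=
                mul_le_mul_of_nonneg_left
                  (by rw [inv_le_one_iff₀]; right; exact_mod_cast hq.le) (by positivity)
            _ = _ := mul_one _
        have h2 : ‖ϖ ^ n * c‖ ≤ ((q:ℝ)⁻¹) ^ n := by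
          rw [norm_mul, norm_pow, hϖ]
          calc ((q:ℝ)⁻¹)^n * ‖c‖ ≤ ((q:ℝ)⁻¹)^n * 1 :=
                mul_le_mul_of_nonneg_left (hCnorm c hcC) (by positivity)
            _ = _ := mul_one _
        have : z = (z - ϖ ^ n * c) + ϖ ^ n * c := by ring
        rw [hT, Set.mem_setOf_eq, this]
        exact (IsUltrametricDist.norm_add_le_max _ _).trans (max_le h1 h2)
    have hdisj : (↑C : Set F).PairwiseDisjoint co := by
      intro c hc c' hc' hne
      rw [Function.onFun, Set.disjoint_left]
      intro z hz hz'
      rw [hcoval] at hz hz'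
      apply hne
      have hcc' : ‖c - c'‖ < 1 := by
        have : c - c' = (ϖ ^ n)⁻¹ * ((z - ϖ^n * c') - (z - ϖ^n * c)) := by
          field_simp; ring
        rw [this, norm_mul, norm_inv, norm_pow, hϖ]
        rw [show (((q:ℝ)⁻¹)^n)⁻¹ = (q:ℝ)^n by rw [← inv_pow, inv_inv]]
        have hb : ‖(z - ϖ^n * c') - (z - ϖ^n * c)‖ ≤ ((q:ℝ)⁻¹) ^ (n+1) := by
          rw [sub_eq_add_neg]
          exact (IsUltrametricDist.norm_add_le_max _ _).trans
            (max_le hz' (by rwa [norm_neg]))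
        calc (q:ℝ)^n * ‖(z - ϖ^n * c') - (z - ϖ^n * c)‖
            ≤ (q:ℝ)^n * ((q:ℝ)⁻¹) ^ (n+1) := mul_le_mul_of_nonneg_left hb (by positivity)
          _ = (q:ℝ)⁻¹ := by rw [pow_succ, ← mul_assoc, ← mul_pow, mul_inv_cancel₀ hq0.ne', one_pow, one_mul]
          _ < 1 := by rw [inv_lt_one_iff₀]; right; exact_mod_cast hq
      obtain ⟨d, _, hduniq⟩ := hCuniq c (hCnorm c hc)
      have e1 : c = d := hduniq c ⟨hc, by simpa using (zero_lt_one : (0:ℝ) < 1)⟩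
      have e2 : c' = d := hduniq c' ⟨hc', hcc'⟩
      rw [e1, e2]
    have hcomeas : ∀ c, MeasurableSet (co c) := by
      intro c
      exact (hmeas _).preimage (continuous_const.add continuous_id).measurable
    have hsum : vol (T n) = ∑ c ∈ C, vol (co c) := by
      rw [hcover]
      exact measure_biUnion_finset hdisj fun c _ => hcomeas c
    have hcovol : ∀ c, vol (co c) = vol (T (n+1)) := by
      intro c
      exact measure_preimage_add vol _ _
    rw [ih] at hsum
    rw [Finset.sum_congr rfl (fun c _ => hcovol c), Finset.sum_const, hCcard] at hsum
    have hqe : (q : ℝ≥0∞) ≠ 0 := by exact_mod_cast (Nat.pos_of_ne_zero (by omega)).ne'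
    have hqt : (q : ℝ≥0∞) ≠ ⊤ := ENNReal.natCast_ne_top q
    rw [nsmul_eq_mul] at hsum
    have : vol (T (n+1)) = (q:ℝ≥0∞)⁻¹ * (q:ℝ≥0∞)⁻¹ ^ n := by
      rw [hsum, ← mul_assoc, ENNReal.inv_mul_cancel hqe hqt, one_mul]
    rw [this, pow_succ, mul_comm]

private lemma theta_inner
    (q : ℕ) (hq : 1 < q) (ϖ : F) (hϖ : ‖ϖ‖ = (q : ℝ)⁻¹)
    (hϖgen : ∀ x : F, ‖x‖ < 1 → ∃ c : F, ‖c‖ ≤ 1 ∧ x = ϖ * c)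
    (vol : Measure F) [Measure.IsAddHaarMeasure vol]
    (hvol : vol {x : F | ‖x‖ ≤ 1} = 1)
    (χ : F → ℂ) (hχadd : ∀ x y : F, χ (x + y) = χ x * χ y)
    (hχtriv : ∀ x : F, ‖x‖ ≤ 1 → χ x = 1)
    (hχnontriv : ∃ x : F, ‖x‖ ≤ (q : ℝ) ∧ χ x ≠ 1)
    (y : F) :
    (∫ z in {z : F | ‖z‖ ≤ 1}, χ (z * y) ∂vol) = if ‖y‖ ≤ 1 then 1 else 0 := by
  have hSm : MeasurableSet {z : F | ‖z‖ ≤ 1} :=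
    (isClosed_le continuous_norm continuous_const).measurableSet
  split_ifs with hy
  · rw [setIntegral_congr_fun hSm (g := fun _ => (1:ℂ))
      (fun z hz => hχtriv _ (by rw [norm_mul]; exact mul_le_one₀ hz (norm_nonneg _) hy))]
    rw [setIntegral_const, measureReal_def, hvol]
    simp
  · push_neg at hy
    have hy0 : y ≠ 0 := by intro h; rw [h, norm_zero] at hy; linarith
    have hq0 : (0:ℝ) < q := by positivity
    have hyq : (q:ℝ) ≤ ‖y‖ := by
      have h1 : ‖y⁻¹‖ < 1 := by
        rw [norm_inv]; rw [inv_lt_one_iff₀]; right; exact hy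
      obtain ⟨c, hc, hcy⟩ := hϖgen _ h1
      have : ‖y⁻¹‖ ≤ (q:ℝ)⁻¹ := by
        rw [hcy, norm_mul, hϖ]
        calc (q:ℝ)⁻¹ * ‖c‖ ≤ (q:ℝ)⁻¹ * 1 := mul_le_mul_of_nonneg_left hc (by positivity)
          _ = (q:ℝ)⁻¹ := mul_one _
      rw [norm_inv] at this
      rw [← inv_inv (q:ℝ)]
      exact (inv_anti₀ (by positivity) this).trans_eq (inv_inv _)
    obtain ⟨x₀, hx₀q, hx₀⟩ := hχnontriv
    set z₀ : F := x₀ * y⁻¹ with hz₀def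
    have hz₀ : ‖z₀‖ ≤ 1 := by
      rw [hz₀def, norm_mul, norm_inv]
      calc ‖x₀‖ * ‖y‖⁻¹ ≤ ‖y‖ * ‖y‖⁻¹ :=
            mul_le_mul_of_nonneg_right (hx₀q.trans hyq) (by positivity)
        _ = 1 := mul_inv_cancel₀ (norm_ne_zero_iff.mpr hy0)
    have hz₀y : z₀ * y = x₀ := by
      rw [hz₀def]; field_simp
    set S : Set F := {z : F | ‖z‖ ≤ 1} with hSdef
    set g : F → ℂ := S.indicator (fun z => χ (z * y)) with hgdef
    have hmem : ∀ z : F, z + z₀ ∈ S ↔ z ∈ S := by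
      intro z
      constructor
      · intro h
        have : ‖z‖ = ‖(z + z₀) + (-z₀)‖ := by ring_nf
        rw [hSdef, Set.mem_setOf_eq, this]
        exact (IsUltrametricDist.norm_add_le_max _ _).trans
          (max_le h (by rwa [norm_neg]))
      · intro h
        exact (IsUltrametricDist.norm_add_le_max _ _).trans (max_le h hz₀)
    have key : ∀ z : F, g (z + z₀) = χ x₀ * g z := by
      intro z
      by_cases h : z ∈ S
      · rw [hgdef]
        rw [Set.indicator_of_mem ((hmem z).mpr h), Set.indicator_of_mem h]
        rw [add_mul, hχadd, hz₀y, mul_comm]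
      · rw [hgdef, Set.indicator_of_notMem (fun hh => h ((hmem z).mp hh)),
          Set.indicator_of_notMem h, mul_zero]
    have hinv : ∫ z, g (z + z₀) ∂vol = ∫ z, g z ∂vol :=
      integral_add_right_eq_self g z₀
    simp_rw [key] at hinv
    rw [integral_const_mul] at hinv
    have hI : ∫ z, g z ∂vol = ∫ z in S, χ (z * y) ∂vol := integral_indicator hSm
    rw [hI] at hinv
    have := sub_eq_zero.mpr hinv
    have h2 : (χ x₀ - 1) * ∫ z in S, χ (z * y) ∂vol = 0 := by
      rw [sub_mul, one_mul, this]
    rcases mul_eq_zero.mp h2 with h | h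
    · exact absurd (sub_eq_zero.mp h) hx₀
    · exact h

end Aux

/-- the function `Θ(x) = ∫_{O_F × O_F} χ(z₁ z₂ x) dz₁ dz₂` equals `1` for
`‖x‖ ≤ 1` and equals `q^{-ℓ}` for `‖x‖ = q^ℓ` with `ℓ ≥ 1`. -/
theorem Theta_formula {F : Type*} [NormedField F] [CompleteSpace F]
    [IsUltrametricDist F] [LocallyCompactSpace F] [MeasurableSpace F] [BorelSpace F]
    (q : ℕ) (hq : 1 < q) (ϖ : F) (hϖ : ‖ϖ‖ = (q : ℝ)⁻¹)
    (hϖgen : ∀ x : F, ‖x‖ < 1 → ∃ c : F, ‖c‖ ≤ 1 ∧ x = ϖ * c)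
    (hres : ∃ C : Finset F, C.card = q ∧ (∀ c ∈ C, ‖c‖ ≤ 1) ∧
      ∀ x : F, ‖x‖ ≤ 1 → ∃! c, c ∈ C ∧ ‖x - c‖ < 1)
    (vol : Measure F) [Measure.IsAddHaarMeasure vol]
    (hvol : vol {x : F | ‖x‖ ≤ 1} = 1)
    (χ : F → ℂ) (hχadd : ∀ x y : F, χ (x + y) = χ x * χ y)
    (hχcont : Continuous χ) (hχnorm : ∀ x : F, ‖χ x‖ = 1)
    (hχtriv : ∀ x : F, ‖x‖ ≤ 1 → χ x = 1)
    (hχnontriv : ∃ x : F, ‖x‖ ≤ (q : ℝ) ∧ χ x ≠ 1) :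
    (∀ x : F, ‖x‖ ≤ 1 →
      (∫ z₁ in {z : F | ‖z‖ ≤ 1}, ∫ z₂ in {z : F | ‖z‖ ≤ 1},
          χ (z₁ * z₂ * x) ∂vol ∂vol) = 1)
    ∧
    (∀ (x : F) (ℓ : ℤ), ‖x‖ = (q : ℝ) ^ ℓ → 1 ≤ ℓ →
      (∫ z₁ in {z : F | ‖z‖ ≤ 1}, ∫ z₂ in {z : F | ‖z‖ ≤ 1},
          χ (z₁ * z₂ * x) ∂vol ∂vol) = (((q : ℝ) ^ (-ℓ) : ℝ) : ℂ)) := by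
  have hq0 : (0:ℝ) < q := by positivity
  have hSm : MeasurableSet {z : F | ‖z‖ ≤ 1} :=
    (isClosed_le continuous_norm continuous_const).measurableSet
  have hinner := theta_inner q hq ϖ hϖ hϖgen vol hvol χ hχadd hχtriv hχnontriv
  constructor
  · intro x hx
    rw [setIntegral_congr_fun hSm (g := fun _ => (1:ℂ)) (fun z₁ hz₁ => by
      have hc : ∀ z₂ : F, z₁ * z₂ * x = z₂ * (z₁ * x) := fun z₂ => by ring
      simp_rw [hc]
      rw [hinner (z₁ * x),
        if_pos (by rw [norm_mul]; exact mul_le_one₀ hz₁ (norm_nonneg _) hx)])]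
    rw [setIntegral_const, measureReal_def, hvol]
    simp
  · intro x ℓ hx hℓ
    set n : ℕ := ℓ.toNat with hn
    have hnℓ : (n : ℤ) = ℓ := Int.toNat_of_nonneg (by omega)
    have hqℓ : (q:ℝ) ^ ℓ = (q:ℝ) ^ n := by rw [← hnℓ, zpow_natCast]
    set T : Set F := {z : F | ‖z‖ ≤ ((q:ℝ)⁻¹) ^ n} with hT
    have hTm : MeasurableSet T :=
      (isClosed_le continuous_norm continuous_const).measurableSet
    have hiff : ∀ z : F, ‖z * x‖ ≤ 1 ↔ z ∈ T := by
      intro z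
      rw [norm_mul, hx, hqℓ, hT, Set.mem_setOf_eq, inv_pow,
        ← le_div_iff₀ (by positivity), one_div]
    have hTS : T ⊆ {z : F | ‖z‖ ≤ 1} := by
      intro z hz
      have hz' : ‖z‖ ≤ ((q:ℝ)⁻¹) ^ n := hz
      show ‖z‖ ≤ 1
      refine hz'.trans ?_
      rw [inv_pow]
      rw [inv_le_one_iff₀]; right
      exact one_le_pow₀ (by exact_mod_cast hq.le)
    rw [setIntegral_congr_fun hSm (g := T.indicator (fun _ => (1:ℂ))) (fun z₁ hz₁ => by
      have hc : ∀ z₂ : F, z₁ * z₂ * x = z₂ * (z₁ * x) := fun z₂ => by ring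
      simp_rw [hc]
      rw [hinner (z₁ * x)]
      by_cases h : z₁ ∈ T
      · rw [if_pos ((hiff z₁).mpr h), Set.indicator_of_mem h]
      · rw [if_neg (fun hh => h ((hiff z₁).mp hh)), Set.indicator_of_notMem h])]
    rw [setIntegral_indicator hTm, Set.inter_eq_self_of_subset_right hTS,
      setIntegral_const]
    rw [measureReal_def, theta_vol_ball q hq ϖ hϖ hϖgen hres vol hvol n]
    have hval : ((q : ℝ≥0∞)⁻¹ ^ n).toReal = (q:ℝ) ^ (-ℓ) := by
      rw [ENNReal.toReal_pow, ENNReal.toReal_inv, ENNReal.toReal_natCast,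
        zpow_neg, hqℓ, ← inv_pow]
    rw [hval]
    simp
end

section
/- Let Δ be the set of nonincreasing sequences (k_j)_{j≥1} with values in ℤ ∪ {−∞}. For ℓ ∈ ℤ and k ∈ Δ set f_ℓ(k) := ∑_{j=1}^{∞} (k_j + ℓ)·1_{k_j + ℓ ≥ 1} ∈ ℕ ∪ {+∞} (terms with k_j = −∞ contribute 0). Then the map k ↦ (f_ℓ(k))_{ℓ∈ℤ} from Δ to (ℕ ∪ {+∞})^{ℤ} is injective: if k, k̃ ∈ Δ satisfy f_ℓ(k) = f_ℓ(k̃) for every ℓ ∈ ℤ, then k_j = k̃_j for all j. -/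
open scoped ENNReal

/-- The contribution `(k + ℓ)·1_{k + ℓ ≥ 1}` of one entry `k ∈ ℤ ∪ {-∞}`,
with `-∞` contributing `0`. -/
noncomputable def contrib (ℓ : ℤ) : WithBot ℤ → ℝ≥0∞ :=
  fun x => WithBot.recBotCoe 0 (fun k : ℤ => ((k + ℓ).toNat : ℝ≥0∞)) x

lemma contrib_bot (ℓ : ℤ) : contrib ℓ ⊥ = 0 := rfl

lemma contrib_coe (ℓ m : ℤ) : contrib ℓ (m : WithBot ℤ) = ((m + ℓ).toNat : ℝ≥0∞) := rfl

lemma contrib_ne_top (ℓ : ℤ) (x : WithBot ℤ) : contrib ℓ x ≠ ∞ := by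
  cases x with
  | bot => simp [contrib_bot]
  | coe m => simp [contrib_coe]

lemma aux (k k' : ℕ → WithBot ℤ) (hk' : Antitone k')
    (h : ∀ ℓ : ℤ, ∑' j : ℕ, contrib ℓ (k j) = ∑' j : ℕ, contrib ℓ (k' j))
    (j : ℕ) (hmin : ∀ i < j, k i = k' i) (hlt : k' j < k j) : False := by
  have hne : k j ≠ ⊥ := fun hb => not_lt_bot (hb ▸ hlt)
  obtain ⟨m, hm⟩ := WithBot.ne_bot_iff_exists.mp hne
  set ℓ : ℤ := 1 - m with hℓ
  -- tail of k' vanishes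
  have h1 : ∀ i : ℕ, contrib ℓ (k' (i + j)) = 0 := by
    intro i
    have hle : k' (i + j) < (m : WithBot ℤ) := lt_of_le_of_lt (hk' (Nat.le_add_left j i)) (hm ▸ hlt)
    cases hx : k' (i + j) with
    | bot => exact contrib_bot ℓ
    | coe n =>
      rw [hx] at hle
      have hn : n < m := by exact_mod_cast hle
      rw [contrib_coe]
      simp only [hℓ]
      have : n + (1 - m) ≤ 0 := by omega
      simp [Int.toNat_of_nonpos this]
  have h2 : contrib ℓ (k j) = 1 := by
    rw [← hm, contrib_coe]
    simp [hℓ]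
  have hsplit : ∀ f : ℕ → ℝ≥0∞,
      (∑ i ∈ Finset.range j, f i) + ∑' i, f (i + j) = ∑' i, f i :=
    fun f => ((ENNReal.summable (f := fun n => f (n + j))).hasSum.sum_range_add).tsum_eq.symm
  have hk'sum : ∑' i, contrib ℓ (k' i) = ∑ i ∈ Finset.range j, contrib ℓ (k' i) := by
    rw [← hsplit fun i => contrib ℓ (k' i)]
    simp [h1]
  have hSeq : ∑ i ∈ Finset.range j, contrib ℓ (k i)
      = ∑ i ∈ Finset.range j, contrib ℓ (k' i) :=
    Finset.sum_congr rfl fun i hi => by rw [hmin i (Finset.mem_range.mp hi)]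
  have hSne : (∑ i ∈ Finset.range j, contrib ℓ (k' i)) ≠ ∞ :=
    (ENNReal.sum_lt_top.mpr fun i _ => lt_top_iff_ne_top.mpr (contrib_ne_top ℓ (k' i))).ne
  have htail : (∑' i, contrib ℓ (k (i + j))) = 0 := by
    have := h ℓ
    rw [← hsplit fun i => contrib ℓ (k i), hSeq, hk'sum] at this
    have h0 : (∑ i ∈ Finset.range j, contrib ℓ (k' i)) + ∑' i, contrib ℓ (k (i + j))
        = (∑ i ∈ Finset.range j, contrib ℓ (k' i)) + 0 := by
      rw [add_zero]; exact this
    exact (ENNReal.add_right_inj hSne).mp h0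
  have hge : (1 : ℝ≥0∞) ≤ ∑' i, contrib ℓ (k (i + j)) := by
    calc (1 : ℝ≥0∞) = contrib ℓ (k (0 + j)) := by rw [Nat.zero_add, h2]
    _ ≤ _ := ENNReal.le_tsum 0
  rw [htail] at hge
  exact (not_le.mpr zero_lt_one) hge

/-- the map `k ↦ (∑_j (k_j + ℓ)·1_{k_j + ℓ ≥ 1})_{ℓ ∈ ℤ}` is injective on
the set `Δ` of nonincreasing sequences with values in `ℤ ∪ {-∞}`. -/
theorem delta_injective (k k' : ℕ → WithBot ℤ) (hk : Antitone k) (hk' : Antitone k')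
    (h : ∀ ℓ : ℤ, ∑' j : ℕ, contrib ℓ (k j) = ∑' j : ℕ, contrib ℓ (k' j)) :
    k = k' := by
  by_contra hne
  obtain ⟨j0, hj0⟩ := Function.ne_iff.mp hne
  have hex : ∃ j, k j ≠ k' j := ⟨j0, hj0⟩
  set j := Nat.find hex with hj
  have hmin : ∀ i < j, k i = k' i := fun i hi =>
    not_not.mp (Nat.find_min hex hi)
  rcases lt_or_gt_of_ne (Nat.find_spec hex) with hlt | hgt
  · exact aux k' k hk (fun ℓ => (h ℓ).symm) j (fun i hi => (hmin i hi).symm) hlt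
  · exact aux k k' hk' h j hmin hgt
end

section
/- Let Δ be the set of nonincreasing sequences (k_j)_{j≥1} with values in ℤ ∪ {−∞}, equipped with the subspace topology of the product topology on (ℤ ∪ {−∞})^{ℕ} where ℤ ∪ {−∞} carries the discrete topology. For each fixed ℓ ∈ ℤ, the map f : Δ → ℕ ∪ {+∞} defined by f(k) := ∑_{j=1}^{∞} (k_j + ℓ)·1_{k_j + ℓ ≥ 1} (terms with k_j = −∞ contributing 0) is continuous, where ℕ ∪ {+∞} carries the order topology. -/
open scoped ENNReal

lemma contrib_mono (ℓ : ℤ) : Monotone (contrib ℓ) := by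
  intro x y hxy
  induction x using WithBot.recBotCoe with
  | bot => simp [contrib]
  | coe a =>
    induction y using WithBot.recBotCoe with
    | bot => exact absurd hxy (by simp)
    | coe b =>
      simp only [contrib, WithBot.recBotCoe_coe, Nat.cast_le]
      exact Int.toNat_le_toNat ((add_le_add_iff_right ℓ).2 (WithBot.coe_le_coe.1 hxy))

lemma contrib_one_le (ℓ : ℤ) {x : WithBot ℤ} (h : contrib ℓ x ≠ 0) :
    1 ≤ contrib ℓ x := by
  induction x using WithBot.recBotCoe with
  | bot => simp [contrib] at h
  | coe a =>
    simp only [contrib, WithBot.recBotCoe_coe] at h ⊢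
    have : (a + ℓ).toNat ≠ 0 := by exact_mod_cast h
    exact_mod_cast Nat.one_le_iff_ne_zero.2 this

/-- for each fixed `ℓ ∈ ℤ`, the map
`k ↦ ∑_j (k_j + ℓ)·1_{k_j + ℓ ≥ 1}` is continuous from the set `Δ` of nonincreasing
sequences in `ℤ ∪ {-∞}` (a subspace of the product of discrete spaces `ℤ ∪ {-∞}`)
to `ℕ ∪ {+∞}` with the order topology. -/
theorem delta_sum_continuous (ℓ : ℤ) :
    @Continuous {k : ℕ → WithBot ℤ // Antitone k} ℝ≥0∞
      (TopologicalSpace.induced Subtype.val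
        (@Pi.topologicalSpace ℕ (fun _ => WithBot ℤ) fun _ => ⊥))
      inferInstance
      (fun k => ∑' j : ℕ, contrib ℓ (k.1 j)) := by
  letI : TopologicalSpace (WithBot ℤ) := ⊥
  haveI : DiscreteTopology (WithBot ℤ) := ⟨rfl⟩
  letI tΔ : TopologicalSpace {k : ℕ → WithBot ℤ // Antitone k} :=
    TopologicalSpace.induced Subtype.val
      (@Pi.topologicalSpace ℕ (fun _ => WithBot ℤ) fun _ => ⊥)
  have hval : Continuous (Subtype.val : {k : ℕ → WithBot ℤ // Antitone k} → ℕ → WithBot ℤ) :=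
    continuous_induced_dom
  have heval : ∀ i : ℕ, Continuous fun k' : {k : ℕ → WithBot ℤ // Antitone k} => k'.1 i :=
    fun i => (continuous_apply i).comp hval
  rw [continuous_iff_continuousAt]
  intro k
  have hUopen : ∀ N : ℕ,
      IsOpen {k' : {k : ℕ → WithBot ℤ // Antitone k} | ∀ i < N, k'.1 i = k.1 i} := by
    intro N
    have : {k' : {k : ℕ → WithBot ℤ // Antitone k} | ∀ i < N, k'.1 i = k.1 i}
        = ⋂ i ∈ Finset.range N, {k' : {k : ℕ → WithBot ℤ // Antitone k} | k'.1 i = k.1 i} := by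
      ext k'; simp [Finset.mem_range]
    rw [this]
    exact isOpen_biInter_finset fun i _ =>
      (isOpen_discrete {k.1 i}).preimage (heval i)
  have hUmem : ∀ N : ℕ,
      {k' : {k : ℕ → WithBot ℤ // Antitone k} | ∀ i < N, k'.1 i = k.1 i} ∈ nhds k :=
    fun N => (hUopen N).mem_nhds (fun i _ => rfl)
  by_cases h : ∀ j : ℕ, contrib ℓ (k.1 j) ≠ 0
  · -- the sum is infinite on a neighborhood
    have key : ∀ N : ℕ, ∀ k' : {k : ℕ → WithBot ℤ // Antitone k},
        (∀ i < N, k'.1 i = k.1 i) → (N : ℝ≥0∞) ≤ ∑' j : ℕ, contrib ℓ (k'.1 j) := by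
      intro N k' hk'
      calc (N : ℝ≥0∞) = ∑ i ∈ Finset.range N, 1 := by simp
        _ ≤ ∑ i ∈ Finset.range N, contrib ℓ (k'.1 i) := by
            refine Finset.sum_le_sum fun i hi => ?_
            rw [hk' i (Finset.mem_range.1 hi)]
            exact contrib_one_le ℓ (h i)
        _ ≤ ∑' j : ℕ, contrib ℓ (k'.1 j) := ENNReal.sum_le_tsum _
    have hktop : (∑' j : ℕ, contrib ℓ (k.1 j)) = ⊤ := by
      refine top_unique (le_of_forall_lt fun a ha => ?_)
      obtain ⟨N, hN⟩ := ENNReal.exists_nat_gt ha.ne_top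
      exact lt_of_lt_of_le hN (key N k fun i _ => rfl)
    unfold ContinuousAt
    beta_reduce
    rw [hktop]
    refine ENNReal.tendsto_nhds_top fun n => ?_
    filter_upwards [hUmem (n + 1)] with k' hk'
    exact lt_of_lt_of_le (by exact_mod_cast Nat.lt_succ_self n) (key (n + 1) k' hk')
  · -- locally constant
    push_neg at h
    obtain ⟨j, hj⟩ := h
    have hsum : ∀ k' : {k : ℕ → WithBot ℤ // Antitone k},
        (∀ i < j + 1, k'.1 i = k.1 i) →
        (∑' i : ℕ, contrib ℓ (k'.1 i)) = ∑ i ∈ Finset.range (j + 1), contrib ℓ (k'.1 i) := by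
      intro k' hk'
      refine tsum_eq_sum fun i hi => ?_
      have hji : j ≤ i := by
        have := Finset.mem_range.not.1 hi
        omega
      have h0 : contrib ℓ (k'.1 j) = 0 := by rw [hk' j (Nat.lt_succ_self j)]; exact hj
      have := contrib_mono ℓ (k'.2 hji)
      rw [h0] at this
      exact le_antisymm this zero_le
    have hconst : ∀ k' : {k : ℕ → WithBot ℤ // Antitone k},
        (∀ i < j + 1, k'.1 i = k.1 i) →
        (∑' i : ℕ, contrib ℓ (k'.1 i)) = ∑' i : ℕ, contrib ℓ (k.1 i) := by
      intro k' hk'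
      rw [hsum k' hk', hsum k fun i _ => rfl]
      exact Finset.sum_congr rfl fun i hi => by rw [hk' i (Finset.mem_range.1 hi)]
    have : (fun k' : {k : ℕ → WithBot ℤ // Antitone k} => ∑' i : ℕ, contrib ℓ (k'.1 i))
        =ᶠ[nhds k] fun _ => ∑' i : ℕ, contrib ℓ (k.1 i) := by
      filter_upwards [hUmem (j + 1)] with k' hk' using hconst k' hk'
    exact this.continuousAt
end
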